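/- arXiv:1510.08970 — 2 statements merged into one kernel-verified Lean document; each statement's English description precedes it below -/
import Mathlib

section
/- For all atomic propositions p, q ∈ 𝒫 and every infinite word σ over 2^𝒫: V(σ, □·(p ⇒ ◇·q)) = ( W(σ, □(p ⇒ ◇q)), W(σ, □◇p ⇒ □◇q), W(σ, ◇□p ⇒ □◇q), W(σ, □p ⇒ ◇q) ). In particular the four components of the robust semantics of □·(p ⇒ ◇·q) are exactly: the LTL response property, strong fairness (compassion), weak fairness (justice), and the implication □p ⇒ ◇q. -/
/-- Truth values as 4-tuples of Booleans. -/
abbrev TV := Bool × Bool × Bool × Bool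

def ttop : TV := (true, true, true, true)
def tbot : TV := (false, false, false, false)

/-- Componentwise order on 4-tuples. -/
def tle (a b : TV) : Prop :=
  a.1 ≤ b.1 ∧ a.2.1 ≤ b.2.1 ∧ a.2.2.1 ≤ b.2.2.1 ∧ a.2.2.2 ≤ b.2.2.2

instance : DecidableRel tle := fun a b =>
  decidable_of_iff (a.1 ≤ b.1 ∧ a.2.1 ≤ b.2.1 ∧ a.2.2.1 ≤ b.2.2.1 ∧ a.2.2.2 ≤ b.2.2.2) Iff.rfl

def tmeet (a b : TV) : TV :=
  (a.1 && b.1, a.2.1 && b.2.1, a.2.2.1 && b.2.2.1, a.2.2.2 && b.2.2.2)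

def tjoin (a b : TV) : TV :=
  (a.1 || b.1, a.2.1 || b.2.1, a.2.2.1 || b.2.2.1, a.2.2.2 || b.2.2.2)

/-- da Costa negation. -/
def tneg (a : TV) : TV := if a = ttop then tbot else ttop

/-- Residual implication. -/
def timp (a b : TV) : TV := if tle a b then ttop else b

/-- Infimum of a Boolean sequence. -/
noncomputable def bInf (f : ℕ → Bool) : Bool :=
  @decide (∀ i, f i = true) (Classical.propDecidable _)

/-- Supremum of a Boolean sequence. -/
noncomputable def bSup (f : ℕ → Bool) : Bool :=
  @decide (∃ i, f i = true) (Classical.propDecidable _)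

/-- Bounded infimum over `i < n`. -/
noncomputable def bInfLt (n : ℕ) (f : ℕ → Bool) : Bool :=
  @decide (∀ i, i < n → f i = true) (Classical.propDecidable _)

/-- Bounded supremum over `i < n`. -/
noncomputable def bSupLt (n : ℕ) (f : ℕ → Bool) : Bool :=
  @decide (∃ i, i < n ∧ f i = true) (Classical.propDecidable _)

/-- Suffix of an infinite word. -/
def suffix {P : Type} (σ : ℕ → Set P) (i : ℕ) : ℕ → Set P := fun j => σ (i + j)

/-- rLTL(□,◇) formulas. -/
inductive RFormula (P : Type) : Type where
  | atom : P → RFormula P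
  | not : RFormula P → RFormula P
  | and : RFormula P → RFormula P → RFormula P
  | or : RFormula P → RFormula P → RFormula P
  | imp : RFormula P → RFormula P → RFormula P
  | always : RFormula P → RFormula P
  | eventually : RFormula P → RFormula P
  deriving DecidableEq

open scoped Classical in
/-- The 5-valued rLTL semantics. -/
noncomputable def rV {P : Type} : RFormula P → (ℕ → Set P) → TV
  | .atom p, σ => if p ∈ σ 0 then ttop else tbot
  | .not φ, σ => tneg (rV φ σ)
  | .and φ ψ, σ => tmeet (rV φ σ) (rV ψ σ)
  | .or φ ψ, σ => tjoin (rV φ σ) (rV ψ σ)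
  | .imp φ ψ, σ => timp (rV φ σ) (rV ψ σ)
  | .always φ, σ =>
      (bInf fun i => (rV φ (suffix σ i)).1,
       bSup fun j => bInf fun i => (rV φ (suffix σ (j + i))).2.1,
       bInf fun j => bSup fun i => (rV φ (suffix σ (j + i))).2.2.1,
       bSup fun i => (rV φ (suffix σ i)).2.2.2)
  | .eventually φ, σ =>
      (bSup fun i => (rV φ (suffix σ i)).1,
       bSup fun i => (rV φ (suffix σ i)).2.1,
       bSup fun i => (rV φ (suffix σ i)).2.2.1,
       bSup fun i => (rV φ (suffix σ i)).2.2.2)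

/-- Projection onto the k-th component. -/
def comp : Fin 4 → TV → Bool
  | 0, a => a.1
  | 1, a => a.2.1
  | 2, a => a.2.2.1
  | 3, a => a.2.2.2

/-- LTL(□,◇) formulas, built from atomic propositions by ¬, ∨, □, ◇. -/
inductive LFormula (P : Type) : Type where
  | atom : P → LFormula P
  | not : LFormula P → LFormula P
  | or : LFormula P → LFormula P → LFormula P
  | always : LFormula P → LFormula P
  | eventually : LFormula P → LFormula P

/-- Derived conjunction. -/
def LFormula.and {P : Type} (φ ψ : LFormula P) : LFormula P :=
  .not (.or (.not φ) (.not ψ))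

/-- Derived implication. -/
def LFormula.imp {P : Type} (φ ψ : LFormula P) : LFormula P :=
  .or (.not φ) ψ

open scoped Classical in
/-- The standard Boolean LTL semantics. -/
noncomputable def lW {P : Type} : LFormula P → (ℕ → Set P) → Bool
  | .atom p, σ => if p ∈ σ 0 then true else false
  | .not φ, σ => !(lW φ σ)
  | .or φ ψ, σ => lW φ σ || lW ψ σ
  | .always φ, σ => bInf fun i => lW φ (suffix σ i)
  | .eventually φ, σ => bSup fun i => lW φ (suffix σ i)


section AuxLemmas
open scoped Classical

lemma bInf_iff (f : ℕ → Bool) : bInf f = true ↔ ∀ i, f i = true := by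
  unfold bInf; exact decide_eq_true_iff

lemma bSup_iff (f : ℕ → Bool) : bSup f = true ↔ ∃ i, f i = true := by
  unfold bSup; exact decide_eq_true_iff

lemma bInf_false_iff (f : ℕ → Bool) : bInf f = false ↔ ∃ i, f i = false := by
  rw [← Bool.not_eq_true, bInf_iff]; push_neg; simp

lemma bSup_false_iff (f : ℕ → Bool) : bSup f = false ↔ ∀ i, f i = false := by
  rw [← Bool.not_eq_true, bSup_iff]; push_neg; simp

lemma rV_ev_atom {P : Type} (q : P) (τ : ℕ → Set P) :
    rV (.eventually (.atom q)) τ =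
      ((bSup fun m => decide (q ∈ τ m)), (bSup fun m => decide (q ∈ τ m)),
       (bSup fun m => decide (q ∈ τ m)), (bSup fun m => decide (q ∈ τ m))) := by
  simp only [rV]
  have h : ∀ m, (if q ∈ suffix τ m 0 then ttop else tbot) =
      ((decide (q ∈ τ m) : Bool), (decide (q ∈ τ m) : Bool),
       (decide (q ∈ τ m) : Bool), (decide (q ∈ τ m) : Bool)) := by
    intro m
    by_cases h : q ∈ τ m
    · have h' : q ∈ suffix τ m 0 := h
      simp [h', h, ttop, tbot]
    · have h' : q ∉ suffix τ m 0 := h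
      simp [h', h, ttop, tbot]
  simp only [h]

lemma rV_resp {P : Type} (p q : P) (τ : ℕ → Set P) :
    rV (.imp (.atom p) (.eventually (.atom q))) τ =
      (((!decide (p ∈ τ 0)) || bSup fun m => decide (q ∈ τ m)),
       ((!decide (p ∈ τ 0)) || bSup fun m => decide (q ∈ τ m)),
       ((!decide (p ∈ τ 0)) || bSup fun m => decide (q ∈ τ m)),
       ((!decide (p ∈ τ 0)) || bSup fun m => decide (q ∈ τ m))) := by
  rw [show rV (.imp (.atom p) (.eventually (.atom q))) τ =
      timp (rV (.atom p) τ) (rV (.eventually (.atom q)) τ) from rfl,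
    rV_ev_atom]
  by_cases hp : p ∈ τ 0
  · by_cases he : (bSup fun m => decide (q ∈ τ m)) = true
    · simp [rV, hp, he, timp, tle, ttop]
    · simp only [Bool.not_eq_true] at he
      simp [rV, hp, he, timp, tle, ttop]
  · simp [rV, hp, timp, tle, tbot, ttop]

lemma lW_atom {P : Type} (r : P) (τ : ℕ → Set P) :
    lW (.atom r) τ = decide (r ∈ τ 0) := by
  show (if _ then true else false) = _; simp

lemma lW_ev_atom {P : Type} (r : P) (τ : ℕ → Set P) :
    lW (.eventually (.atom r)) τ = bSup fun m => decide (r ∈ τ m) := by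
  show (bSup fun m => lW (LFormula.atom r) (suffix τ m)) = _
  have h : (fun m => lW (LFormula.atom r) (suffix τ m)) = fun m => decide (r ∈ τ m) := by
    funext m; rw [lW_atom]; simp [suffix]
  rw [h]

lemma lW_alw_atom {P : Type} (r : P) (τ : ℕ → Set P) :
    lW (.always (.atom r)) τ = bInf fun m => decide (r ∈ τ m) := by
  show (bInf fun m => lW (LFormula.atom r) (suffix τ m)) = _
  have h : (fun m => lW (LFormula.atom r) (suffix τ m)) = fun m => decide (r ∈ τ m) := by
    funext m; rw [lW_atom]; simp [suffix]
  rw [h]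

lemma lW_alw_ev_atom {P : Type} (r : P) (σ : ℕ → Set P) :
    lW (.always (.eventually (.atom r))) σ =
      bInf fun j => bSup fun i => decide (r ∈ σ (j + i)) := by
  show (bInf fun j => lW (LFormula.eventually (.atom r)) (suffix σ j)) = _
  have h : (fun j => lW (LFormula.eventually (.atom r)) (suffix σ j)) =
      fun j => bSup fun i => decide (r ∈ σ (j + i)) := by
    funext j; rw [lW_ev_atom]; rfl
  rw [h]

lemma lW_ev_alw_atom {P : Type} (r : P) (σ : ℕ → Set P) :
    lW (.eventually (.always (.atom r))) σ =
      bSup fun j => bInf fun i => decide (r ∈ σ (j + i)) := by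
  show (bSup fun j => lW (LFormula.always (.atom r)) (suffix σ j)) = _
  have h : (fun j => lW (LFormula.always (.atom r)) (suffix σ j)) =
      fun j => bInf fun i => decide (r ∈ σ (j + i)) := by
    funext j; rw [lW_alw_atom]; rfl
  rw [h]

lemma lW_response {P : Type} (p q : P) (σ : ℕ → Set P) :
    lW (.always (LFormula.imp (.atom p) (.eventually (.atom q)))) σ =
      bInf fun i => (!decide (p ∈ σ i)) || bSup fun m => decide (q ∈ σ (i + m)) := by
  show (bInf fun i => lW (LFormula.imp (.atom p) (.eventually (.atom q))) (suffix σ i)) = _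
  have h : (fun i => lW (LFormula.imp (.atom p) (.eventually (.atom q))) (suffix σ i)) =
      fun i => (!decide (p ∈ σ i)) || bSup fun m => decide (q ∈ σ (i + m)) := by
    funext i
    show ((!lW (LFormula.atom p) (suffix σ i)) ||
        lW (LFormula.eventually (.atom q)) (suffix σ i)) = _
    rw [lW_atom, lW_ev_atom]
    simp [suffix]
    rfl
  rw [h]

lemma fair2 (A B : ℕ → Prop) :
    (∃ j, ∀ i, ¬A (j + i) ∨ ∃ m, B (j + i + m)) ↔
      (∃ j, ∀ i, ¬A (j + i)) ∨ (∀ j, ∃ i, B (j + i)) := by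
  constructor
  · rintro ⟨j, hj⟩
    by_cases hB : ∀ k, ∃ i, B (k + i)
    · exact Or.inr hB
    · left
      push_neg at hB
      obtain ⟨k, hk⟩ := hB
      refine ⟨max j k, fun i => ?_⟩
      have h1 := hj (max j k - j + i)
      rw [show j + (max j k - j + i) = max j k + i by omega] at h1
      rcases h1 with h1 | ⟨m, hm⟩
      · exact h1
      · exact absurd (by rw [show max j k + i + m = k + (max j k + i + m - k) by omega] at hm; exact hm) (hk _)
  · rintro (⟨j, hj⟩ | h)
    · exact ⟨j, fun i => Or.inl (hj i)⟩
    · refine ⟨0, fun i => Or.inr ?_⟩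
      obtain ⟨m, hm⟩ := h (0 + i)
      exact ⟨m, hm⟩

lemma fair3 (A B : ℕ → Prop) :
    (∀ j, ∃ i, ¬A (j + i) ∨ ∃ m, B (j + i + m)) ↔
      (∀ j, ∃ i, ¬A (j + i)) ∨ (∀ j, ∃ i, B (j + i)) := by
  constructor
  · intro h
    by_cases hA : ∃ j0, ∀ i, A (j0 + i)
    · right
      obtain ⟨j0, hj0⟩ := hA
      intro k
      obtain ⟨i, hi⟩ := h (max j0 k)
      rcases hi with hi | ⟨m, hm⟩
      · exact absurd (by rw [show max j0 k + i = j0 + (max j0 k + i - j0) by omega]; exact hj0 _) hi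
      · exact ⟨max j0 k + i + m - k, by rw [show k + (max j0 k + i + m - k) = max j0 k + i + m by omega]; exact hm⟩
    · left
      push_neg at hA
      exact hA
  · rintro (h | h) j
    · obtain ⟨i, hi⟩ := h j
      exact ⟨i, Or.inl hi⟩
    · obtain ⟨i, hi⟩ := h j
      exact ⟨0, Or.inr ⟨i, by simpa using hi⟩⟩

lemma fair4 (A B : ℕ → Prop) :
    (∃ i, ¬A i ∨ ∃ m, B (i + m)) ↔ (∃ i, ¬A i) ∨ (∃ i, B i) := by
  constructor
  · rintro ⟨i, hi | ⟨m, hm⟩⟩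
    · exact Or.inl ⟨i, hi⟩
    · exact Or.inr ⟨i + m, hm⟩
  · rintro (⟨i, hi⟩ | ⟨i, hi⟩)
    · exact ⟨i, Or.inl hi⟩
    · exact ⟨i, Or.inr ⟨0, by simpa using hi⟩⟩

end AuxLemmas

open scoped Classical in
/-- For atomic propositions `p, q` and every infinite word `σ`:
`V(σ, □(p ⇒ ◇q)) = (W(σ,□(p ⇒ ◇q)), W(σ,□◇p ⇒ □◇q), W(σ,◇□p ⇒ □◇q), W(σ,□p ⇒ ◇q))`,
i.e. the four components are the LTL response property, strong fairness, weak fairness,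
and the implication `□p ⇒ ◇q`. -/
theorem robust_response_recovers_fairness {P : Type} (p q : P) (σ : ℕ → Set P) :
    rV (.always (.imp (.atom p) (.eventually (.atom q)))) σ =
      (lW (.always (LFormula.imp (.atom p) (.eventually (.atom q)))) σ,
       lW (LFormula.imp (.always (.eventually (.atom p)))
             (.always (.eventually (.atom q)))) σ,
       lW (LFormula.imp (.eventually (.always (.atom p)))
             (.always (.eventually (.atom q)))) σ,
       lW (LFormula.imp (.always (.atom p)) (.eventually (.atom q))) σ) := by
  set c : ℕ → Bool := fun i => (!decide (p ∈ σ i)) || bSup fun m => decide (q ∈ σ (i + m)) with hc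
  have hcomp : ∀ i, rV (RFormula.imp (.atom p) (.eventually (.atom q))) (suffix σ i) =
      (c i, c i, c i, c i) := by
    intro i
    rw [rV_resp]
    simp [hc, suffix]
    rfl
  have hLHS : rV (RFormula.always (.imp (.atom p) (.eventually (.atom q)))) σ =
      ((bInf fun i => c i),
       (bSup fun j => bInf fun i => c (j + i)),
       (bInf fun j => bSup fun i => c (j + i)),
       (bSup fun i => c i)) := by
    show ((bInf fun i => _), (bSup fun j => bInf fun i => _),
          (bInf fun j => bSup fun i => _), (bSup fun i => _)) = _
    simp only [hcomp]
  have himp : ∀ (φ ψ : LFormula P), lW (LFormula.imp φ ψ) σ = ((!lW φ σ) || lW ψ σ) :=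
    fun _ _ => rfl
  rw [hLHS, himp, himp, himp, lW_response, lW_alw_ev_atom, lW_alw_ev_atom,
    lW_ev_alw_atom, lW_alw_atom, lW_ev_atom]
  refine Prod.ext ?_ (Prod.ext ?_ (Prod.ext ?_ ?_))
  · -- response
    rfl
  · -- strong fairness
    show (bSup fun j => bInf fun i => c (j + i)) = _
    rw [Bool.eq_iff_iff]
    simp only [hc, Bool.or_eq_true, Bool.not_eq_true', bInf_iff, bSup_iff, bInf_false_iff,
      bSup_false_iff, decide_eq_true_eq, decide_eq_false_iff_not]
    exact fair2 (fun n => p ∈ σ n) (fun n => q ∈ σ n)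
  · -- weak fairness
    show (bInf fun j => bSup fun i => c (j + i)) = _
    rw [Bool.eq_iff_iff]
    simp only [hc, Bool.or_eq_true, Bool.not_eq_true', bInf_iff, bSup_iff, bInf_false_iff,
      bSup_false_iff, decide_eq_true_eq, decide_eq_false_iff_not]
    exact fair3 (fun n => p ∈ σ n) (fun n => q ∈ σ n)
  · -- implication
    show (bSup fun i => c i) = _
    rw [Bool.eq_iff_iff]
    simp only [hc, Bool.or_eq_true, Bool.not_eq_true', bInf_iff, bSup_iff, bInf_false_iff,
      bSup_false_iff, decide_eq_true_eq, decide_eq_false_iff_not]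
    exact fair4 (fun n => p ∈ σ n) (fun n => q ∈ σ n)
end

section
/- For every rLTL(□·,◇·) formula φ over a nonempty finite set 𝒫 of atomic propositions there exists a generalized Büchi automaton A over the alphabet Σ = 2^𝒫 (without a designated initial state) together with a family of states (q_b)_{b ∈ B₄} such that: (i) the number of states of A is at most 5^{|cl(φ)|} + 4; (ii) A has at most 4·|cl(φ)| acceptance sets; and (iii) for every b ∈ B₄ and every infinite word σ ∈ Σ^ω, A has an accepting run on σ starting in q_b if and only if V(σ,φ) = b. -/
/-- The closure (set of subformulas) of an rLTL(□,◇) formula. -/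
def cl {P : Type} [DecidableEq P] : RFormula P → Finset (RFormula P)
  | .atom p => {.atom p}
  | .not φ => insert (.not φ) (cl φ)
  | .and φ ψ => insert (.and φ ψ) (cl φ ∪ cl ψ)
  | .or φ ψ => insert (.or φ ψ) (cl φ ∪ cl ψ)
  | .imp φ ψ => insert (.imp φ ψ) (cl φ ∪ cl ψ)
  | .always φ => insert (.always φ) (cl φ)
  | .eventually φ => insert (.eventually φ) (cl φ)

/-- A generalized Büchi automaton (without designated initial state) over alphabet `S`
with state space `Q`: a transition relation and a finite set of acceptance sets. -/
structure GBA (S : Type) (Q : Type) where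
  Δ : Q → S → Q → Prop
  Acc : Finset (Set Q)

/-- `A` has an accepting run on `σ` starting in state `q`: there is a run starting in `q`,
following the transition relation, that visits every acceptance set infinitely often. -/
def AcceptsFrom {S Q : Type} (A : GBA S Q) (q : Q) (σ : ℕ → S) : Prop :=
  ∃ ρ : ℕ → Q, ρ 0 = q ∧ (∀ i, A.Δ (ρ i) (σ i) (ρ (i + 1)))
    ∧ ∀ F ∈ A.Acc, ∀ i : ℕ, ∃ j, i ≤ j ∧ ρ j ∈ F

/-- The 4-tuples belonging to B₄ (monotone tuples). -/
def TVMono (a : TV) : Prop := a.1 ≤ a.2.1 ∧ a.2.1 ≤ a.2.2.1 ∧ a.2.2.1 ≤ a.2.2.2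

section Prelim

/-! ### Boolean and stream preliminaries -/

instance : DecidablePred TVMono := fun a =>
  decidable_of_iff (a.1 ≤ a.2.1 ∧ a.2.1 ≤ a.2.2.1 ∧ a.2.2.1 ≤ a.2.2.2) Iff.rfl

lemma beq_of_iff {a b : Bool} (h : a = true ↔ b = true) : a = b := by
  cases a <;> cases b <;> simp_all

lemma bool_le_iff {a b : Bool} : a ≤ b ↔ (a = true → b = true) := by
  cases a <;> cases b <;> decide

lemma bInf_eq_true {f : ℕ → Bool} : bInf f = true ↔ ∀ i, f i = true := by
  simp [bInf]

lemma bInf_eq_false {f : ℕ → Bool} : bInf f = false ↔ ∃ i, f i = false := by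
  constructor
  · intro h
    by_contra hc
    have : ∀ i, f i = true := by
      intro i
      by_contra h2
      exact hc ⟨i, by simpa using h2⟩
    rw [bInf_eq_true.2 this] at h
    simp at h
  · rintro ⟨i, hi⟩
    cases h : bInf f with
    | false => rfl
    | true => rw [bInf_eq_true.1 h i] at hi; exact absurd hi (by simp)

lemma bSup_eq_true {f : ℕ → Bool} : bSup f = true ↔ ∃ i, f i = true := by
  simp [bSup]

lemma bSup_eq_false {f : ℕ → Bool} : bSup f = false ↔ ∀ i, f i = false := by
  constructor
  · intro h i
    cases hi : f i with
    | false => rfl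
    | true => rw [bSup_eq_true.2 ⟨i, hi⟩] at h; exact absurd h (by simp)
  · intro h
    cases hs : bSup f with
    | false => rfl
    | true =>
      obtain ⟨i, hi⟩ := bSup_eq_true.1 hs
      rw [h i] at hi; exact absurd hi (by simp)

lemma box_sound (y a : ℕ → Bool) (heq : ∀ t, a t = (y t && a (t+1)))
    (hacc : ∀ t, ∃ s, t ≤ s ∧ (a s = true ∨ y s = false)) :
    ∀ t, a t = bInf (fun i => y (t + i)) := by
  intro t
  cases h : a t with
  | true =>
    have key : ∀ i, a (t+i) = true := by
      intro i
      induction i with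
      | zero => simpa using h
      | succ n ih =>
        have h2 := heq (t+n)
        rw [ih] at h2
        have h3 : y (t+n) = true ∧ a (t+n+1) = true := by
          rw [← Bool.and_eq_true]; exact h2.symm
        exact h3.2
    symm
    rw [bInf_eq_true]
    intro i
    have h2 := heq (t+i)
    rw [key i] at h2
    have h3 : y (t+i) = true ∧ a (t+i+1) = true := by
      rw [← Bool.and_eq_true]; exact h2.symm
    exact h3.1
  | false =>
    symm
    rw [bInf_eq_false]
    by_contra hall
    have hy : ∀ i, y (t+i) = true := by
      intro i
      by_contra h2
      exact hall ⟨i, by simpa using h2⟩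
    have key : ∀ i, a (t+i) = false := by
      intro i
      induction i with
      | zero => simpa using h
      | succ n ih =>
        have h2 := heq (t+n)
        rw [ih, hy n] at h2
        exact h2.symm
    obtain ⟨s, hts, hs⟩ := hacc t
    obtain ⟨i, rfl⟩ := Nat.exists_eq_add_of_le hts
    rcases hs with h1 | h1
    · rw [key i] at h1; exact Bool.false_ne_true h1
    · rw [hy i] at h1; exact absurd h1.symm (by simp)

lemma dia_sound (y a : ℕ → Bool) (heq : ∀ t, a t = (y t || a (t+1)))
    (hacc : ∀ t, ∃ s, t ≤ s ∧ (a s = false ∨ y s = true)) :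
    ∀ t, a t = bSup (fun i => y (t + i)) := by
  intro t
  cases h : a t with
  | false =>
    have key : ∀ i, a (t+i) = false := by
      intro i
      induction i with
      | zero => simpa using h
      | succ n ih =>
        have h2 := heq (t+n)
        rw [ih] at h2
        have h3 : y (t+n) = false ∧ a (t+n+1) = false := by
          rw [← Bool.or_eq_false_iff]; exact h2.symm
        exact h3.2
    symm
    rw [bSup_eq_false]
    intro i
    have h2 := heq (t+i)
    rw [key i] at h2
    have h3 : y (t+i) = false ∧ a (t+i+1) = false := by
      rw [← Bool.or_eq_false_iff]; exact h2.symm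
    exact h3.1
  | true =>
    symm
    rw [bSup_eq_true]
    by_contra hall
    have hy : ∀ i, y (t+i) = false := by
      intro i
      by_contra h2
      exact hall ⟨i, by simpa using h2⟩
    have key : ∀ i, a (t+i) = true := by
      intro i
      induction i with
      | zero => simpa using h
      | succ n ih =>
        have h2 := heq (t+n)
        rw [ih, hy n] at h2
        exact h2.symm
    obtain ⟨s, hts, hs⟩ := hacc t
    obtain ⟨i, rfl⟩ := Nat.exists_eq_add_of_le hts
    rcases hs with h1 | h1
    · rw [key i] at h1; simp at h1
    · rw [hy i] at h1; exact Bool.false_ne_true h1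

lemma box_acc (y : ℕ → Bool) :
    ∀ t, ∃ s, t ≤ s ∧ (bInf (fun i => y (s + i)) = true ∨ y s = false) := by
  intro t
  by_cases h : ∃ s, t ≤ s ∧ y s = false
  · obtain ⟨s, hts, hs⟩ := h
    exact ⟨s, hts, Or.inr hs⟩
  · push_neg at h
    refine ⟨t, le_refl _, Or.inl ?_⟩
    rw [bInf_eq_true]
    intro i
    have := h (t+i) (Nat.le_add_right _ _)
    simpa using this

lemma dia_acc (y : ℕ → Bool) :
    ∀ t, ∃ s, t ≤ s ∧ (bSup (fun i => y (s + i)) = false ∨ y s = true) := by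
  intro t
  by_cases h : ∃ s, t ≤ s ∧ y s = true
  · obtain ⟨s, hts, hs⟩ := h
    exact ⟨s, hts, Or.inr hs⟩
  · push_neg at h
    refine ⟨t, le_refl _, Or.inl ?_⟩
    rw [bSup_eq_false]
    intro i
    have := h (t+i) (Nat.le_add_right _ _)
    simpa using this

lemma const_of_step (a : ℕ → Bool) (h : ∀ t, a t = a (t+1)) : ∀ s t, a s = a t := by
  have h0 : ∀ t, a t = a 0 := by
    intro t
    induction t with
    | zero => rfl
    | succ n ih => rw [← h n, ih]
  intro s t; rw [h0 s, h0 t]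

end Prelim

section Streams

lemma bInf_mono {f g : ℕ → Bool} (h : ∀ i, f i ≤ g i) : bInf f ≤ bInf g := by
  rw [bool_le_iff]
  intro hf
  rw [bInf_eq_true] at hf ⊢
  intro i
  exact bool_le_iff.1 (h i) (hf i)

lemma bSup_mono {f g : ℕ → Bool} (h : ∀ i, f i ≤ g i) : bSup f ≤ bSup g := by
  rw [bool_le_iff]
  intro hf
  rw [bSup_eq_true] at hf ⊢
  obtain ⟨i, hi⟩ := hf
  exact ⟨i, bool_le_iff.1 (h i) hi⟩

lemma bInf_succ (f : ℕ → Bool) : bInf f = (f 0 && bInf (fun i => f (1+i))) := by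
  apply beq_of_iff
  rw [Bool.and_eq_true, bInf_eq_true, bInf_eq_true]
  constructor
  · intro h; exact ⟨h 0, fun i => h _⟩
  · rintro ⟨h0, h⟩ i
    cases i with
    | zero => exact h0
    | succ n => have := h n; simpa [Nat.add_comm] using this

lemma bSup_succ (f : ℕ → Bool) : bSup f = (f 0 || bSup (fun i => f (1+i))) := by
  apply beq_of_iff
  rw [Bool.or_eq_true, bSup_eq_true, bSup_eq_true]
  constructor
  · rintro ⟨i, hi⟩
    cases i with
    | zero => exact Or.inl hi
    | succ n => exact Or.inr ⟨n, by simpa [Nat.add_comm] using hi⟩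
  · rintro (h | ⟨i, hi⟩)
    · exact ⟨0, h⟩
    · exact ⟨1+i, hi⟩

lemma inf_le_supinf (f : ℕ → Bool) : bInf f ≤ bSup (fun j => bInf fun i => f (j+i)) := by
  rw [bool_le_iff]
  intro h
  rw [bSup_eq_true]
  refine ⟨0, ?_⟩
  rw [bInf_eq_true] at h ⊢
  intro i; simpa using h i

lemma supinf_le_infsup {f g : ℕ → Bool} (h : ∀ t, f t ≤ g t) :
    bSup (fun j => bInf fun i => f (j+i)) ≤ bInf (fun j => bSup fun i => g (j+i)) := by
  rw [bool_le_iff]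
  intro hf
  rw [bSup_eq_true] at hf
  obtain ⟨j0, hj0⟩ := hf
  rw [bInf_eq_true] at hj0 ⊢
  intro j
  rw [bSup_eq_true]
  refine ⟨j0, ?_⟩
  have := bool_le_iff.1 (h (j0 + j)) (hj0 j)
  rw [← this]
  congr 1
  omega

lemma infsup_le_sup (f : ℕ → Bool) : bInf (fun j => bSup fun i => f (j+i)) ≤ bSup f := by
  rw [bool_le_iff]
  intro h
  rw [bInf_eq_true] at h
  have := h 0
  rw [bSup_eq_true] at this ⊢
  obtain ⟨i, hi⟩ := this
  exact ⟨0+i, hi⟩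

lemma antitone_of_step {f : ℕ → Bool} (h : ∀ t, f (t+1) ≤ f t) :
    ∀ s t, s ≤ t → f t ≤ f s := by
  intro s t hst
  obtain ⟨k, rfl⟩ := Nat.exists_eq_add_of_le hst
  clear hst
  induction k with
  | zero => exact le_refl _
  | succ n ih => exact le_trans (h (s+n)) ih

lemma antitone_supinf {f : ℕ → Bool} (h : ∀ t, f (t+1) ≤ f t) :
    bSup (fun j => bInf fun i => f (j+i)) = bInf f := by
  apply beq_of_iff
  rw [bSup_eq_true, bInf_eq_true]
  constructor
  · rintro ⟨j, hj⟩
    rw [bInf_eq_true] at hj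
    intro k
    have := hj k
    exact bool_le_iff.1 (antitone_of_step h k (j+k) (Nat.le_add_left _ _)) this
  · intro hall
    exact ⟨0, bInf_eq_true.2 fun i => hall _⟩

lemma antitone_sup_head {f : ℕ → Bool} (h : ∀ t, f (t+1) ≤ f t) :
    bSup f = f 0 := by
  apply beq_of_iff
  rw [bSup_eq_true]
  constructor
  · rintro ⟨i, hi⟩
    exact bool_le_iff.1 (antitone_of_step h 0 i (Nat.zero_le _)) hi
  · intro h0; exact ⟨0, h0⟩

lemma sup_tail_antitone (f : ℕ → Bool) (t : ℕ) :
    bSup (fun i => f ((t+1)+i)) ≤ bSup (fun i => f (t+i)) := by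
  rw [bool_le_iff]
  intro h
  rw [bSup_eq_true] at h ⊢
  obtain ⟨i, hi⟩ := h
  exact ⟨1+i, by rw [← hi]; congr 1; omega⟩

lemma supinf_shift (f : ℕ → Bool) (t : ℕ) :
    bSup (fun j => bInf fun i => f ((t+1)+(j+i))) = bSup (fun j => bInf fun i => f (t+(j+i))) := by
  apply beq_of_iff
  rw [bSup_eq_true, bSup_eq_true]
  constructor
  · rintro ⟨j, hj⟩
    refine ⟨1+j, ?_⟩
    rw [bInf_eq_true] at hj ⊢
    intro i
    have := hj i
    rw [← this]; congr 1; omega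
  · rintro ⟨j, hj⟩
    refine ⟨j, ?_⟩
    rw [bInf_eq_true] at hj ⊢
    intro i
    have := hj (1+i)
    rw [← this]; congr 1; omega

lemma infsup_shift (f : ℕ → Bool) (t : ℕ) :
    bInf (fun j => bSup fun i => f ((t+1)+(j+i))) = bInf (fun j => bSup fun i => f (t+(j+i))) := by
  apply beq_of_iff
  rw [bInf_eq_true, bInf_eq_true]
  constructor
  · intro h j
    have := h j
    rw [bSup_eq_true] at this ⊢
    obtain ⟨i, hi⟩ := this
    exact ⟨1+i, by rw [← hi]; congr 1; omega⟩
  · intro h j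
    have := h (1+j)
    rw [bSup_eq_true] at this ⊢
    obtain ⟨i, hi⟩ := this
    exact ⟨i, by rw [← hi]; congr 1; omega⟩

end Streams

section SuffixRV

variable {P : Type}

lemma suffix_zero (σ : ℕ → Set P) : suffix σ 0 = σ := by
  funext j; simp [suffix]

lemma suffix_suffix (σ : ℕ → Set P) (i j : ℕ) :
    suffix (suffix σ i) j = suffix σ (i + j) := by
  funext k; simp [suffix, Nat.add_assoc]

/-- Component streams of the valuation of `χ` along the suffixes of `σ`. -/
noncomputable def st1 (χ : RFormula P) (σ : ℕ → Set P) : ℕ → Bool := fun t => (rV χ (suffix σ t)).1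
noncomputable def st2 (χ : RFormula P) (σ : ℕ → Set P) : ℕ → Bool := fun t => (rV χ (suffix σ t)).2.1
noncomputable def st3 (χ : RFormula P) (σ : ℕ → Set P) : ℕ → Bool := fun t => (rV χ (suffix σ t)).2.2.1
noncomputable def st4 (χ : RFormula P) (σ : ℕ → Set P) : ℕ → Bool := fun t => (rV χ (suffix σ t)).2.2.2

lemma rV_always (χ : RFormula P) (σ : ℕ → Set P) :
    rV (.always χ) σ =
      (bInf (fun i => st1 χ σ i),
       bSup (fun j => bInf fun i => st2 χ σ (j+i)),
       bInf (fun j => bSup fun i => st3 χ σ (j+i)),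
       bSup (fun i => st4 χ σ i)) := by
  simp [rV, st1, st2, st3, st4]

lemma rV_eventually (χ : RFormula P) (σ : ℕ → Set P) :
    rV (.eventually χ) σ =
      (bSup (fun i => st1 χ σ i), bSup (fun i => st2 χ σ i),
       bSup (fun i => st3 χ σ i), bSup (fun i => st4 χ σ i)) := by
  simp [rV, st1, st2, st3, st4]

lemma st1_suffix (χ : RFormula P) (σ : ℕ → Set P) (t u : ℕ) :
    st1 χ (suffix σ t) u = st1 χ σ (t+u) := by simp [st1, suffix_suffix]
lemma st2_suffix (χ : RFormula P) (σ : ℕ → Set P) (t u : ℕ) :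
    st2 χ (suffix σ t) u = st2 χ σ (t+u) := by simp [st2, suffix_suffix]
lemma st3_suffix (χ : RFormula P) (σ : ℕ → Set P) (t u : ℕ) :
    st3 χ (suffix σ t) u = st3 χ σ (t+u) := by simp [st3, suffix_suffix]
lemma st4_suffix (χ : RFormula P) (σ : ℕ → Set P) (t u : ℕ) :
    st4 χ (suffix σ t) u = st4 χ σ (t+u) := by simp [st4, suffix_suffix]

lemma rV_atom_cases (p : P) (σ : ℕ → Set P) :
    rV (.atom p) σ = ttop ∨ rV (.atom p) σ = tbot := by
  simp only [rV]
  by_cases h : p ∈ σ 0 <;> simp [h]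

lemma rV_not_cases (χ : RFormula P) (σ : ℕ → Set P) :
    rV (.not χ) σ = ttop ∨ rV (.not χ) σ = tbot := by
  simp only [rV, tneg]
  by_cases h : rV χ σ = ttop <;> simp [h]

lemma tvmono_boolean :
    (TVMono ttop) ∧ (TVMono tbot) ∧
    (∀ a b : TV, TVMono a → TVMono b → TVMono (tmeet a b)) ∧
    (∀ a b : TV, TVMono a → TVMono b → TVMono (tjoin a b)) := by
  refine ⟨by decide, by decide, ?_, ?_⟩ <;>
  · rintro ⟨a1, a2, a3, a4⟩ ⟨b1, b2, b3, b4⟩ ha hb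
    revert ha hb
    cases a1 <;> cases a2 <;> cases a3 <;> cases a4 <;>
      cases b1 <;> cases b2 <;> cases b3 <;> cases b4 <;> decide

lemma rV_mono (ψ : RFormula P) (σ : ℕ → Set P) : TVMono (rV ψ σ) := by
  induction ψ generalizing σ with
  | atom p =>
    rcases rV_atom_cases p σ with h | h <;> rw [h] <;> decide
  | not χ ih =>
    rcases rV_not_cases χ σ with h | h <;> rw [h] <;> decide
  | and χ₁ χ₂ ih₁ ih₂ =>
    exact tvmono_boolean.2.2.1 _ _ (ih₁ σ) (ih₂ σ)
  | or χ₁ χ₂ ih₁ ih₂ =>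
    exact tvmono_boolean.2.2.2 _ _ (ih₁ σ) (ih₂ σ)
  | imp χ₁ χ₂ ih₁ ih₂ =>
    simp only [rV, timp]
    by_cases h : tle (rV χ₁ σ) (rV χ₂ σ)
    · simp [h]; decide
    · simpa [h] using ih₂ σ
  | always χ ih =>
    rw [rV_always]
    have h12 : ∀ t, st1 χ σ t ≤ st2 χ σ t := fun t => (ih (suffix σ t)).1
    have h23 : ∀ t, st2 χ σ t ≤ st3 χ σ t := fun t => (ih (suffix σ t)).2.1
    have h34 : ∀ t, st3 χ σ t ≤ st4 χ σ t := fun t => (ih (suffix σ t)).2.2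
    refine ⟨?_, ?_, ?_⟩
    · exact le_trans (bInf_mono h12) (inf_le_supinf _)
    · exact supinf_le_infsup h23
    · exact le_trans (infsup_le_sup _) (bSup_mono h34)
  | eventually χ ih =>
    rw [rV_eventually]
    have h12 : ∀ t, st1 χ σ t ≤ st2 χ σ t := fun t => (ih (suffix σ t)).1
    have h23 : ∀ t, st2 χ σ t ≤ st3 χ σ t := fun t => (ih (suffix σ t)).2.1
    have h34 : ∀ t, st3 χ σ t ≤ st4 χ σ t := fun t => (ih (suffix σ t)).2.2
    exact ⟨bSup_mono h12, bSup_mono h23, bSup_mono h34⟩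

/-- For temporal `ψ`, the second and third component streams are antitone. -/
lemma st2_temporal_antitone (ψ : RFormula P) (hψ : (∃ χ, ψ = .always χ) ∨ (∃ χ, ψ = .eventually χ))
    (σ : ℕ → Set P) : ∀ t, st2 ψ σ (t+1) ≤ st2 ψ σ t := by
  intro t
  rcases hψ with ⟨χ, rfl⟩ | ⟨χ, rfl⟩
  · have hc : ∀ u, st2 (RFormula.always χ) σ u = bSup (fun j => bInf fun i => st2 χ σ (u+(j+i))) := by
      intro u
      simp [st2, rV, suffix_suffix]
    rw [hc t, hc (t+1), supinf_shift]
  · have hc : ∀ u, st2 (RFormula.eventually χ) σ u = bSup (fun i => st2 χ σ (u+i)) := by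
      intro u
      simp [st2, rV, suffix_suffix]
    rw [hc t, hc (t+1)]
    exact sup_tail_antitone _ _

lemma st3_temporal_antitone (ψ : RFormula P) (hψ : (∃ χ, ψ = .always χ) ∨ (∃ χ, ψ = .eventually χ))
    (σ : ℕ → Set P) : ∀ t, st3 ψ σ (t+1) ≤ st3 ψ σ t := by
  intro t
  rcases hψ with ⟨χ, rfl⟩ | ⟨χ, rfl⟩
  · have hc : ∀ u, st3 (RFormula.always χ) σ u = bInf (fun j => bSup fun i => st3 χ σ (u+(j+i))) := by
      intro u
      simp [st3, rV, suffix_suffix]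
    rw [hc t, hc (t+1), infsup_shift]
  · have hc : ∀ u, st3 (RFormula.eventually χ) σ u = bSup (fun i => st3 χ σ (u+i)) := by
      intro u
      simp [st3, rV, suffix_suffix]
    rw [hc t, hc (t+1)]
    exact sup_tail_antitone _ _

end SuffixRV

section Cl

variable {P : Type} [DecidableEq P]

lemma mem_cl_self (ψ : RFormula P) : ψ ∈ cl ψ := by
  cases ψ <;> simp [cl]

lemma cl_trans : ∀ {φ ψ : RFormula P}, ψ ∈ cl φ → cl ψ ⊆ cl φ := by
  intro φ
  induction φ with
  | atom p =>
    intro ψ h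
    simp [cl] at h
    subst h
    exact subset_refl _
  | not χ ih =>
    intro ψ h
    simp [cl] at h
    rcases h with rfl | h
    · exact subset_refl _
    · exact (ih h).trans (Finset.subset_insert _ _)
  | and χ₁ χ₂ ih₁ ih₂ =>
    intro ψ h
    simp [cl] at h
    rcases h with rfl | h | h
    · exact subset_refl _
    · exact (ih₁ h).trans ((Finset.subset_union_left).trans (Finset.subset_insert _ _))
    · exact (ih₂ h).trans ((Finset.subset_union_right).trans (Finset.subset_insert _ _))
  | or χ₁ χ₂ ih₁ ih₂ =>
    intro ψ h
    simp [cl] at h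
    rcases h with rfl | h | h
    · exact subset_refl _
    · exact (ih₁ h).trans ((Finset.subset_union_left).trans (Finset.subset_insert _ _))
    · exact (ih₂ h).trans ((Finset.subset_union_right).trans (Finset.subset_insert _ _))
  | imp χ₁ χ₂ ih₁ ih₂ =>
    intro ψ h
    simp [cl] at h
    rcases h with rfl | h | h
    · exact subset_refl _
    · exact (ih₁ h).trans ((Finset.subset_union_left).trans (Finset.subset_insert _ _))
    · exact (ih₂ h).trans ((Finset.subset_union_right).trans (Finset.subset_insert _ _))
  | always χ ih =>
    intro ψ h
    simp [cl] at h
    rcases h with rfl | h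
    · exact subset_refl _
    · exact (ih h).trans (Finset.subset_insert _ _)
  | eventually χ ih =>
    intro ψ h
    simp [cl] at h
    rcases h with rfl | h
    · exact subset_refl _
    · exact (ih h).trans (Finset.subset_insert _ _)

lemma mem_cl_not {φ χ : RFormula P} (h : .not χ ∈ cl φ) : χ ∈ cl φ :=
  cl_trans h (by simp [cl]; exact Or.inr (mem_cl_self χ))

lemma mem_cl_and_left {φ χ₁ χ₂ : RFormula P} (h : .and χ₁ χ₂ ∈ cl φ) : χ₁ ∈ cl φ :=
  cl_trans h (by simp [cl]; exact Or.inr (Or.inl (mem_cl_self χ₁)))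

lemma mem_cl_and_right {φ χ₁ χ₂ : RFormula P} (h : .and χ₁ χ₂ ∈ cl φ) : χ₂ ∈ cl φ :=
  cl_trans h (by simp [cl]; exact Or.inr (Or.inr (mem_cl_self χ₂)))

lemma mem_cl_or_left {φ χ₁ χ₂ : RFormula P} (h : .or χ₁ χ₂ ∈ cl φ) : χ₁ ∈ cl φ :=
  cl_trans h (by simp [cl]; exact Or.inr (Or.inl (mem_cl_self χ₁)))

lemma mem_cl_or_right {φ χ₁ χ₂ : RFormula P} (h : .or χ₁ χ₂ ∈ cl φ) : χ₂ ∈ cl φ :=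
  cl_trans h (by simp [cl]; exact Or.inr (Or.inr (mem_cl_self χ₂)))

lemma mem_cl_imp_left {φ χ₁ χ₂ : RFormula P} (h : .imp χ₁ χ₂ ∈ cl φ) : χ₁ ∈ cl φ :=
  cl_trans h (by simp [cl]; exact Or.inr (Or.inl (mem_cl_self χ₁)))

lemma mem_cl_imp_right {φ χ₁ χ₂ : RFormula P} (h : .imp χ₁ χ₂ ∈ cl φ) : χ₂ ∈ cl φ :=
  cl_trans h (by simp [cl]; exact Or.inr (Or.inr (mem_cl_self χ₂)))

lemma mem_cl_always {φ χ : RFormula P} (h : .always χ ∈ cl φ) : χ ∈ cl φ :=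
  cl_trans h (by simp [cl]; exact Or.inr (mem_cl_self χ))

lemma mem_cl_eventually {φ χ : RFormula P} (h : .eventually χ ∈ cl φ) : χ ∈ cl φ :=
  cl_trans h (by simp [cl]; exact Or.inr (mem_cl_self χ))

lemma exists_atom_mem_cl (φ : RFormula P) : ∃ p, .atom p ∈ cl φ := by
  induction φ with
  | atom p => exact ⟨p, mem_cl_self _⟩
  | not χ ih => obtain ⟨p, hp⟩ := ih; exact ⟨p, Finset.mem_insert_of_mem hp⟩
  | and χ₁ χ₂ ih₁ ih₂ =>
    obtain ⟨p, hp⟩ := ih₁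
    exact ⟨p, Finset.mem_insert_of_mem (Finset.mem_union_left _ hp)⟩
  | or χ₁ χ₂ ih₁ ih₂ =>
    obtain ⟨p, hp⟩ := ih₁
    exact ⟨p, Finset.mem_insert_of_mem (Finset.mem_union_left _ hp)⟩
  | imp χ₁ χ₂ ih₁ ih₂ =>
    obtain ⟨p, hp⟩ := ih₁
    exact ⟨p, Finset.mem_insert_of_mem (Finset.mem_union_left _ hp)⟩
  | always χ ih => obtain ⟨p, hp⟩ := ih; exact ⟨p, Finset.mem_insert_of_mem hp⟩
  | eventually χ ih => obtain ⟨p, hp⟩ := ih; exact ⟨p, Finset.mem_insert_of_mem hp⟩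

lemma cl_card_pos (φ : RFormula P) : 0 < (cl φ).card :=
  Finset.card_pos.2 ⟨φ, mem_cl_self φ⟩

end Cl

section Automaton

variable {P : Type} [DecidableEq P]

/-- A slot: the stored `B₄` value together with the two guess bits `g₂`, `g₃`. -/
abbrev Slot : Type := TV × Bool × Bool

/-- The chain condition `a₁ ≤ g₂ ≤ a₂ ≤ a₃ ≤ g₃ ≤ a₄`. -/
def chainC (s : Slot) : Prop :=
  s.1.1 ≤ s.2.1 ∧ s.2.1 ≤ s.1.2.1 ∧ s.1.2.1 ≤ s.1.2.2.1 ∧ s.1.2.2.1 ≤ s.2.2 ∧ s.2.2 ≤ s.1.2.2.2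

instance : DecidablePred chainC := fun s =>
  decidable_of_iff (s.1.1 ≤ s.2.1 ∧ s.2.1 ≤ s.1.2.1 ∧ s.1.2.1 ≤ s.1.2.2.1 ∧ s.1.2.2.1 ≤ s.2.2 ∧ s.2.2 ≤ s.1.2.2.2) Iff.rfl

/-- Consistency condition for the slot of `□·χ`, depending on the shape of `χ`;
`c` is the slot of the child `χ`. -/
def alwaysCons (s : Slot) (χ : RFormula P) (c : Slot) : Prop :=
  match χ with
  | .and _ _ | .or _ _ | .imp _ _ => chainC s
  | .atom _ | .not _ => TVMono s.1 ∧ s.2.1 = s.1.1 ∧ s.2.2 = s.1.2.2.2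
  | .always _ | .eventually _ => TVMono s.1 ∧ s.2.1 = s.1.2.1 ∧ s.2.2 = c.1.2.2.1

/-- State consistency conditions. -/
def consAt (φ : RFormula P) (v : {ψ : RFormula P // ψ ∈ cl φ} → Slot) : RFormula P → Prop
  | .atom p => ∀ h : .atom p ∈ cl φ,
      ((v ⟨.atom p, h⟩).1 = ttop ∨ (v ⟨.atom p, h⟩).1 = tbot) ∧ (v ⟨.atom p, h⟩).2 = (true, true)
  | .not χ => ∀ h : .not χ ∈ cl φ,
      v ⟨.not χ, h⟩ = (tneg (v ⟨χ, mem_cl_not h⟩).1, true, true)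
  | .and χ₁ χ₂ => ∀ h : .and χ₁ χ₂ ∈ cl φ,
      v ⟨.and χ₁ χ₂, h⟩ =
        (tmeet (v ⟨χ₁, mem_cl_and_left h⟩).1 (v ⟨χ₂, mem_cl_and_right h⟩).1, true, true)
  | .or χ₁ χ₂ => ∀ h : .or χ₁ χ₂ ∈ cl φ,
      v ⟨.or χ₁ χ₂, h⟩ =
        (tjoin (v ⟨χ₁, mem_cl_or_left h⟩).1 (v ⟨χ₂, mem_cl_or_right h⟩).1, true, true)
  | .imp χ₁ χ₂ => ∀ h : .imp χ₁ χ₂ ∈ cl φ,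
      v ⟨.imp χ₁ χ₂, h⟩ =
        (timp (v ⟨χ₁, mem_cl_imp_left h⟩).1 (v ⟨χ₂, mem_cl_imp_right h⟩).1, true, true)
  | .eventually χ => ∀ h : .eventually χ ∈ cl φ,
      TVMono (v ⟨.eventually χ, h⟩).1 ∧ (v ⟨.eventually χ, h⟩).2 = (true, true)
  | .always χ => ∀ h : .always χ ∈ cl φ,
      alwaysCons (v ⟨.always χ, h⟩) χ (v ⟨χ, mem_cl_always h⟩)

def Cons (φ : RFormula P) (v : {ψ : RFormula P // ψ ∈ cl φ} → Slot) : Prop :=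
  ∀ ψ : RFormula P, consAt φ v ψ

open Classical in
/-- Local transition conditions. -/
noncomputable def stepAt (φ : RFormula P) (v : {ψ : RFormula P // ψ ∈ cl φ} → Slot) (s : Set P)
    (w : {ψ : RFormula P // ψ ∈ cl φ} → Slot) : RFormula P → Prop
  | .atom p => ∀ h : .atom p ∈ cl φ,
      (v ⟨.atom p, h⟩).1 = (if p ∈ s then ttop else tbot)
  | .always χ => ∀ h : .always χ ∈ cl φ,
      (v ⟨.always χ, h⟩).1.1 = ((v ⟨χ, mem_cl_always h⟩).1.1 && (w ⟨.always χ, h⟩).1.1) ∧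
      (v ⟨.always χ, h⟩).1.2.1 = (w ⟨.always χ, h⟩).1.2.1 ∧
      (v ⟨.always χ, h⟩).1.2.2.1 = (w ⟨.always χ, h⟩).1.2.2.1 ∧
      (v ⟨.always χ, h⟩).1.2.2.2 = ((v ⟨χ, mem_cl_always h⟩).1.2.2.2 || (w ⟨.always χ, h⟩).1.2.2.2) ∧
      (v ⟨.always χ, h⟩).2.1 = ((v ⟨χ, mem_cl_always h⟩).1.2.1 && (w ⟨.always χ, h⟩).2.1) ∧
      (v ⟨.always χ, h⟩).2.2 = ((v ⟨χ, mem_cl_always h⟩).1.2.2.1 || (w ⟨.always χ, h⟩).2.2)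
  | .eventually χ => ∀ h : .eventually χ ∈ cl φ,
      (v ⟨.eventually χ, h⟩).1.1 = ((v ⟨χ, mem_cl_eventually h⟩).1.1 || (w ⟨.eventually χ, h⟩).1.1) ∧
      (v ⟨.eventually χ, h⟩).1.2.1 = ((v ⟨χ, mem_cl_eventually h⟩).1.2.1 || (w ⟨.eventually χ, h⟩).1.2.1) ∧
      (v ⟨.eventually χ, h⟩).1.2.2.1 = ((v ⟨χ, mem_cl_eventually h⟩).1.2.2.1 || (w ⟨.eventually χ, h⟩).1.2.2.1) ∧
      (v ⟨.eventually χ, h⟩).1.2.2.2 = ((v ⟨χ, mem_cl_eventually h⟩).1.2.2.2 || (w ⟨.eventually χ, h⟩).1.2.2.2)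
  | _ => True

def Step (φ : RFormula P) (v : {ψ : RFormula P // ψ ∈ cl φ} → Slot) (s : Set P)
    (w : {ψ : RFormula P // ψ ∈ cl φ} → Slot) : Prop :=
  ∀ ψ : RFormula P, stepAt φ v s w ψ

/-- Acceptance conditions, indexed by a subformula and a component. -/
def accAt (φ : RFormula P) (v : {ψ : RFormula P // ψ ∈ cl φ} → Slot) :
    RFormula P → ℕ → Prop
  | .always χ, 0 => ∀ h : .always χ ∈ cl φ,
      (v ⟨.always χ, h⟩).1.1 = true ∨ (v ⟨χ, mem_cl_always h⟩).1.1 = false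
  | .always χ, 1 => ∀ h : .always χ ∈ cl φ,
      ((v ⟨.always χ, h⟩).1.2.1 = true ∧ (v ⟨.always χ, h⟩).2.1 = true) ∨
      ((v ⟨.always χ, h⟩).1.2.1 = false ∧ (v ⟨χ, mem_cl_always h⟩).1.2.1 = false)
  | .always χ, 2 => ∀ h : .always χ ∈ cl φ,
      ((v ⟨.always χ, h⟩).1.2.2.1 = true ∧ (v ⟨χ, mem_cl_always h⟩).1.2.2.1 = true) ∨
      ((v ⟨.always χ, h⟩).1.2.2.1 = false ∧ (v ⟨.always χ, h⟩).2.2 = false)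
  | .always χ, 3 => ∀ h : .always χ ∈ cl φ,
      (v ⟨.always χ, h⟩).1.2.2.2 = false ∨ (v ⟨χ, mem_cl_always h⟩).1.2.2.2 = true
  | .eventually χ, 0 => ∀ h : .eventually χ ∈ cl φ,
      (v ⟨.eventually χ, h⟩).1.1 = false ∨ (v ⟨χ, mem_cl_eventually h⟩).1.1 = true
  | .eventually χ, 1 => ∀ h : .eventually χ ∈ cl φ,
      (v ⟨.eventually χ, h⟩).1.2.1 = false ∨ (v ⟨χ, mem_cl_eventually h⟩).1.2.1 = true
  | .eventually χ, 2 => ∀ h : .eventually χ ∈ cl φ,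
      (v ⟨.eventually χ, h⟩).1.2.2.1 = false ∨ (v ⟨χ, mem_cl_eventually h⟩).1.2.2.1 = true
  | .eventually χ, 3 => ∀ h : .eventually χ ∈ cl φ,
      (v ⟨.eventually χ, h⟩).1.2.2.2 = false ∨ (v ⟨χ, mem_cl_eventually h⟩).1.2.2.2 = true
  | _, _ => True

/-- The canonical (truthful) slot for `ψ` at the beginning of `σ`. -/
noncomputable def canonSlot (σ : ℕ → Set P) : RFormula P → Slot
  | .always χ => (rV (.always χ) σ, bInf (st2 χ σ), bSup (st3 χ σ))
  | ψ => (rV ψ σ, true, true)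

lemma canonSlot_fst (σ : ℕ → Set P) (ψ : RFormula P) : (canonSlot σ ψ).1 = rV ψ σ := by
  cases ψ <;> rfl

noncomputable def canonState (φ : RFormula P) (σ : ℕ → Set P) :
    {ψ : RFormula P // ψ ∈ cl φ} → Slot :=
  fun ψ => canonSlot σ ψ.val

/-- Component streams all agree for formulas valued in `{⊤,⊥}`. -/
lemma st_eq_of_topbot {χ : RFormula P} (hχ : ∀ τ : ℕ → Set P, rV χ τ = ttop ∨ rV χ τ = tbot)
    (σ : ℕ → Set P) :
    st2 χ σ = st1 χ σ ∧ st3 χ σ = st4 χ σ := by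
  constructor <;> funext t <;>
  · rcases hχ (suffix σ t) with h | h <;> simp [st1, st2, st3, st4, h, ttop, tbot]

lemma canon_cons (φ : RFormula P) (σ : ℕ → Set P) : Cons φ (canonState φ σ) := by
  intro ψ
  cases ψ with
  | atom p =>
    intro h
    exact ⟨rV_atom_cases p σ, rfl⟩
  | not χ =>
    intro h
    show canonSlot σ (.not χ) = (tneg (canonSlot σ χ).1, true, true)
    rw [canonSlot_fst]
    rfl
  | and χ₁ χ₂ =>
    intro h
    show canonSlot σ (.and χ₁ χ₂) = (tmeet (canonSlot σ χ₁).1 (canonSlot σ χ₂).1, true, true)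
    rw [canonSlot_fst, canonSlot_fst]
    rfl
  | or χ₁ χ₂ =>
    intro h
    show canonSlot σ (.or χ₁ χ₂) = (tjoin (canonSlot σ χ₁).1 (canonSlot σ χ₂).1, true, true)
    rw [canonSlot_fst, canonSlot_fst]
    rfl
  | imp χ₁ χ₂ =>
    intro h
    show canonSlot σ (.imp χ₁ χ₂) = (timp (canonSlot σ χ₁).1 (canonSlot σ χ₂).1, true, true)
    rw [canonSlot_fst, canonSlot_fst]
    rfl
  | eventually χ =>
    intro h
    exact ⟨rV_mono _ _, rfl⟩
  | always χ =>
    intro h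
    have hmono := rV_mono (RFormula.always χ) σ
    have h12 : ∀ t, st1 χ σ t ≤ st2 χ σ t := fun t => (rV_mono χ (suffix σ t)).1
    have h23 : ∀ t, st2 χ σ t ≤ st3 χ σ t := fun t => (rV_mono χ (suffix σ t)).2.1
    have h34 : ∀ t, st3 χ σ t ≤ st4 χ σ t := fun t => (rV_mono χ (suffix σ t)).2.2
    have hA : (canonState φ σ ⟨.always χ, h⟩) = (rV (.always χ) σ, bInf (st2 χ σ), bSup (st3 χ σ)) := rfl
    cases χ with
    | and χ₁ χ₂ =>
      refine ⟨?_, ?_, ?_, ?_, ?_⟩ <;> rw [hA] <;> simp only [rV_always]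
      · exact bInf_mono h12
      · exact inf_le_supinf _
      · exact supinf_le_infsup h23
      · exact infsup_le_sup _
      · exact bSup_mono h34
    | or χ₁ χ₂ =>
      refine ⟨?_, ?_, ?_, ?_, ?_⟩ <;> rw [hA] <;> simp only [rV_always]
      · exact bInf_mono h12
      · exact inf_le_supinf _
      · exact supinf_le_infsup h23
      · exact infsup_le_sup _
      · exact bSup_mono h34
    | imp χ₁ χ₂ =>
      refine ⟨?_, ?_, ?_, ?_, ?_⟩ <;> rw [hA] <;> simp only [rV_always]
      · exact bInf_mono h12
      · exact inf_le_supinf _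
      · exact supinf_le_infsup h23
      · exact infsup_le_sup _
      · exact bSup_mono h34
    | atom p =>
      obtain ⟨h2, h3⟩ := st_eq_of_topbot (rV_atom_cases p) σ
      refine ⟨hmono, ?_, ?_⟩ <;> rw [hA] <;> simp only [rV_always]
      · rw [h2]
      · rw [h3]
    | not χ' =>
      obtain ⟨h2, h3⟩ := st_eq_of_topbot (rV_not_cases χ') σ
      refine ⟨hmono, ?_, ?_⟩ <;> rw [hA] <;> simp only [rV_always]
      · rw [h2]
      · rw [h3]
    | always χ' =>
      refine ⟨hmono, ?_, ?_⟩ <;> rw [hA] <;> simp only [rV_always]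
      · exact (antitone_supinf (st2_temporal_antitone _ (Or.inl ⟨χ', rfl⟩) σ)).symm
      · have := antitone_sup_head (st3_temporal_antitone (RFormula.always χ') (Or.inl ⟨χ', rfl⟩) σ)
        rw [this]
        simp [canonState, st3, suffix_zero, canonSlot_fst]
    | eventually χ' =>
      refine ⟨hmono, ?_, ?_⟩ <;> rw [hA] <;> simp only [rV_always]
      · exact (antitone_supinf (st2_temporal_antitone _ (Or.inr ⟨χ', rfl⟩) σ)).symm
      · have := antitone_sup_head (st3_temporal_antitone (RFormula.eventually χ') (Or.inr ⟨χ', rfl⟩) σ)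
        rw [this]
        simp [canonState, st3, suffix_zero, canonSlot_fst]

end Automaton

section Canon

variable {P : Type} [DecidableEq P]

lemma st1_shiftF (χ : RFormula P) (σ : ℕ → Set P) (t : ℕ) :
    st1 χ (suffix σ t) = fun u => st1 χ σ (t+u) := funext fun u => st1_suffix χ σ t u
lemma st2_shiftF (χ : RFormula P) (σ : ℕ → Set P) (t : ℕ) :
    st2 χ (suffix σ t) = fun u => st2 χ σ (t+u) := funext fun u => st2_suffix χ σ t u
lemma st3_shiftF (χ : RFormula P) (σ : ℕ → Set P) (t : ℕ) :
    st3 χ (suffix σ t) = fun u => st3 χ σ (t+u) := funext fun u => st3_suffix χ σ t u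
lemma st4_shiftF (χ : RFormula P) (σ : ℕ → Set P) (t : ℕ) :
    st4 χ (suffix σ t) = fun u => st4 χ σ (t+u) := funext fun u => st4_suffix χ σ t u

lemma st1_zero (χ : RFormula P) (σ : ℕ → Set P) : st1 χ σ 0 = (rV χ σ).1 := by
  simp [st1, suffix_zero]
lemma st2_zero (χ : RFormula P) (σ : ℕ → Set P) : st2 χ σ 0 = (rV χ σ).2.1 := by
  simp [st2, suffix_zero]
lemma st3_zero (χ : RFormula P) (σ : ℕ → Set P) : st3 χ σ 0 = (rV χ σ).2.2.1 := by
  simp [st3, suffix_zero]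
lemma st4_zero (χ : RFormula P) (σ : ℕ → Set P) : st4 χ σ 0 = (rV χ σ).2.2.2 := by
  simp [st4, suffix_zero]

lemma supinf_shift1 (f : ℕ → Bool) :
    bSup (fun j => bInf fun i => f (1+(j+i))) = bSup (fun j => bInf fun i => f (j+i)) := by
  have := supinf_shift f 0
  simpa using this

lemma infsup_shift1 (f : ℕ → Bool) :
    bInf (fun j => bSup fun i => f (1+(j+i))) = bInf (fun j => bSup fun i => f (j+i)) := by
  have := infsup_shift f 0
  simpa using this

lemma canonSlot_always (σ : ℕ → Set P) (χ : RFormula P) :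
    canonSlot σ (.always χ) = (rV (.always χ) σ, bInf (st2 χ σ), bSup (st3 χ σ)) := rfl

lemma st1_def (χ : RFormula P) (σ : ℕ → Set P) (t : ℕ) :
    (rV χ (suffix σ t)).1 = st1 χ σ t := rfl
lemma st2_def (χ : RFormula P) (σ : ℕ → Set P) (t : ℕ) :
    (rV χ (suffix σ t)).2.1 = st2 χ σ t := rfl
lemma st3_def (χ : RFormula P) (σ : ℕ → Set P) (t : ℕ) :
    (rV χ (suffix σ t)).2.2.1 = st3 χ σ t := rfl
lemma st4_def (χ : RFormula P) (σ : ℕ → Set P) (t : ℕ) :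
    (rV χ (suffix σ t)).2.2.2 = st4 χ σ t := rfl

lemma canon_step (φ : RFormula P) (σ : ℕ → Set P) :
    Step φ (canonState φ σ) (σ 0) (canonState φ (suffix σ 1)) := by
  intro ψ
  cases ψ with
  | atom p =>
    intro h
    show (canonSlot σ (.atom p)).1 = _
    rw [canonSlot_fst]
    simp [rV]
  | always χ =>
    intro h
    have hx : (canonState φ σ ⟨χ, mem_cl_always h⟩).1 = rV χ σ := canonSlot_fst σ χ
    refine ⟨?_, ?_, ?_, ?_, ?_, ?_⟩ <;>
      simp only [canonState, canonSlot_always, canonSlot_fst, rV_always, hx, st1_shiftF, st2_shiftF, st3_shiftF, st4_shiftF]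
    · rw [bInf_succ (fun i => st1 χ σ i)]
      rw [st1_zero]
    · exact (supinf_shift1 _).symm
    · exact (infsup_shift1 _).symm
    · rw [bSup_succ (fun i => st4 χ σ i)]
      rw [st4_zero]
    · rw [bInf_succ (st2 χ σ)]
      rw [st2_zero]
    · rw [bSup_succ (st3 χ σ)]
      rw [st3_zero]
  | eventually χ =>
    intro h
    have hx : (canonState φ σ ⟨χ, mem_cl_eventually h⟩).1 = rV χ σ := canonSlot_fst σ χ
    refine ⟨?_, ?_, ?_, ?_⟩ <;>
      simp only [canonState, canonSlot_fst, rV_eventually, hx, st1_shiftF, st2_shiftF, st3_shiftF, st4_shiftF]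
    · rw [bSup_succ (fun i => st1 χ σ i), st1_zero]
    · rw [bSup_succ (fun i => st2 χ σ i), st2_zero]
    · rw [bSup_succ (fun i => st3 χ σ i), st3_zero]
    · rw [bSup_succ (fun i => st4 χ σ i), st4_zero]
  | not χ => trivial
  | and χ₁ χ₂ => trivial
  | or χ₁ χ₂ => trivial
  | imp χ₁ χ₂ => trivial

lemma canon_acc (φ : RFormula P) (σ : ℕ → Set P) (ψ : RFormula P) (k : ℕ) :
    ∀ i, ∃ j, i ≤ j ∧ accAt φ (canonState φ (suffix σ j)) ψ k := by
  intro i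
  cases ψ with
  | atom p => exact ⟨i, le_refl _, trivial⟩
  | not χ => exact ⟨i, le_refl _, trivial⟩
  | and χ₁ χ₂ => exact ⟨i, le_refl _, trivial⟩
  | or χ₁ χ₂ => exact ⟨i, le_refl _, trivial⟩
  | imp χ₁ χ₂ => exact ⟨i, le_refl _, trivial⟩
  | always χ =>
    rcases k with _ | _ | _ | _ | k
    · -- k = 0
      obtain ⟨s, his, hs⟩ := box_acc (st1 χ σ) i
      refine ⟨s, his, fun h => ?_⟩
      simpa only [canonState, canonSlot_always, canonSlot_fst, st1_def, st2_def, st3_def, st4_def, rV_always, st1_shiftF] using hs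
    · -- k = 1
      by_cases hc : ∃ j₀, ∀ u, st2 χ σ (j₀ + u) = true
      · obtain ⟨j₀, hj₀⟩ := hc
        refine ⟨max i j₀, le_max_left _ _, fun h => ?_⟩
        simp only [canonState, canonSlot_always, canonSlot_fst, st1_def, st2_def, st3_def, st4_def, rV_always, st2_shiftF]
        left
        constructor
        · rw [bSup_eq_true]
          refine ⟨0, ?_⟩
          rw [bInf_eq_true]
          intro u
          have := hj₀ (max i j₀ - j₀ + (0 + u))
          rw [← this]; congr 1; omega
        · rw [bInf_eq_true]
          intro u
          have := hj₀ (max i j₀ - j₀ + u)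
          rw [← this]; congr 1; omega
      · push_neg at hc
        have hc' : ∀ j₀, ∃ u, st2 χ σ (j₀ + u) = false := by
          intro j₀
          obtain ⟨u, hu⟩ := hc j₀
          exact ⟨u, by simpa using hu⟩
        obtain ⟨u, hu⟩ := hc' i
        refine ⟨i + u, Nat.le_add_right _ _, fun h => ?_⟩
        simp only [canonState, canonSlot_always, canonSlot_fst, st1_def, st2_def, st3_def, st4_def, rV_always, st2_shiftF]
        right
        constructor
        · rw [bSup_eq_false]
          intro j'
          rw [bInf_eq_false]
          obtain ⟨u', hu'⟩ := hc' (i + u + j')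
          exact ⟨u', by rw [← hu']; congr 1; omega⟩
        · exact hu
    · -- k = 2
      by_cases hc : ∃ j₀, ∀ u, st3 χ σ (j₀ + u) = false
      · obtain ⟨j₀, hj₀⟩ := hc
        refine ⟨max i j₀, le_max_left _ _, fun h => ?_⟩
        simp only [canonState, canonSlot_always, canonSlot_fst, st1_def, st2_def, st3_def, st4_def, rV_always, st3_shiftF]
        right
        constructor
        · rw [bInf_eq_false]
          refine ⟨0, ?_⟩
          rw [bSup_eq_false]
          intro u
          have := hj₀ (max i j₀ - j₀ + (0 + u))
          rw [← this]; congr 1; omega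
        · rw [bSup_eq_false]
          intro u
          have := hj₀ (max i j₀ - j₀ + u)
          rw [← this]; congr 1; omega
      · push_neg at hc
        have hc' : ∀ j₀, ∃ u, st3 χ σ (j₀ + u) = true := by
          intro j₀
          obtain ⟨u, hu⟩ := hc j₀
          exact ⟨u, by simpa using hu⟩
        obtain ⟨u, hu⟩ := hc' i
        refine ⟨i + u, Nat.le_add_right _ _, fun h => ?_⟩
        simp only [canonState, canonSlot_always, canonSlot_fst, st1_def, st2_def, st3_def, st4_def, rV_always, st3_shiftF]
        left
        constructor
        · rw [bInf_eq_true]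
          intro j'
          rw [bSup_eq_true]
          obtain ⟨u', hu'⟩ := hc' (i + u + j')
          exact ⟨u', by rw [← hu']; congr 1; omega⟩
        · exact hu
    · -- k = 3
      obtain ⟨s, his, hs⟩ := dia_acc (st4 χ σ) i
      refine ⟨s, his, fun h => ?_⟩
      simpa only [canonState, canonSlot_always, canonSlot_fst, st1_def, st2_def, st3_def, st4_def, rV_always, st4_shiftF] using hs
    · exact ⟨i, le_refl _, trivial⟩
  | eventually χ =>
    rcases k with _ | _ | _ | _ | k
    · obtain ⟨s, his, hs⟩ := dia_acc (st1 χ σ) i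
      refine ⟨s, his, fun h => ?_⟩
      simpa only [canonState, canonSlot_fst, st1_def, st2_def, st3_def, st4_def, rV_eventually, st1_shiftF] using hs
    · obtain ⟨s, his, hs⟩ := dia_acc (st2 χ σ) i
      refine ⟨s, his, fun h => ?_⟩
      simpa only [canonState, canonSlot_fst, st1_def, st2_def, st3_def, st4_def, rV_eventually, st2_shiftF] using hs
    · obtain ⟨s, his, hs⟩ := dia_acc (st3 χ σ) i
      refine ⟨s, his, fun h => ?_⟩
      simpa only [canonState, canonSlot_fst, st1_def, st2_def, st3_def, st4_def, rV_eventually, st3_shiftF] using hs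
    · obtain ⟨s, his, hs⟩ := dia_acc (st4 χ σ) i
      refine ⟨s, his, fun h => ?_⟩
      simpa only [canonState, canonSlot_fst, st1_def, st2_def, st3_def, st4_def, rV_eventually, st4_shiftF] using hs
    · exact ⟨i, le_refl _, trivial⟩

end Canon

section Sound

set_option linter.unusedSectionVars false

variable {P : Type} [DecidableEq P]

lemma slot_ext {s s' : Slot} (h1 : s.1.1 = s'.1.1) (h2 : s.1.2.1 = s'.1.2.1)
    (h3 : s.1.2.2.1 = s'.1.2.2.1) (h4 : s.1.2.2.2 = s'.1.2.2.2)
    (h5 : s.2.1 = s'.2.1) (h6 : s.2.2 = s'.2.2) : s = s' := by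
  rcases s with ⟨⟨a1, a2, a3, a4⟩, g2, g3⟩
  rcases s' with ⟨⟨b1, b2, b3, b4⟩, h2', h3'⟩
  simp_all

lemma core_sound (φ : RFormula P) (σ : ℕ → Set P)
    (ν : ℕ → {ψ : RFormula P // ψ ∈ cl φ} → Slot)
    (hcons : ∀ t, Cons φ (ν t))
    (hrun : ∀ t, Step φ (ν t) (σ t) (ν (t+1)))
    (hacc : ∀ (ψ : RFormula P) (k : ℕ) (i : ℕ), ∃ j, i ≤ j ∧ accAt φ (ν j) ψ k) :
    ∀ (ψ : RFormula P) (h : ψ ∈ cl φ) (t : ℕ), ν t ⟨ψ, h⟩ = canonSlot (suffix σ t) ψ := by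
  intro ψ
  induction ψ with
  | atom p =>
    intro h t
    have hstep := hrun t (.atom p) h
    have hcons' := hcons t (.atom p) h
    apply Prod.ext
    · rw [hstep]
      show _ = rV (.atom p) (suffix σ t)
      simp [rV, suffix]
      congr
    · exact hcons'.2
  | not χ ih =>
    intro h t
    have hcons' := hcons t (.not χ) h
    rw [hcons', ih (mem_cl_not h) t]
    show _ = canonSlot (suffix σ t) (.not χ)
    rw [canonSlot_fst]
    rfl
  | and χ₁ χ₂ ih₁ ih₂ =>
    intro h t
    have hcons' := hcons t (.and χ₁ χ₂) h
    rw [hcons', ih₁ (mem_cl_and_left h) t, ih₂ (mem_cl_and_right h) t]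
    show _ = canonSlot (suffix σ t) (.and χ₁ χ₂)
    rw [canonSlot_fst, canonSlot_fst]
    rfl
  | or χ₁ χ₂ ih₁ ih₂ =>
    intro h t
    have hcons' := hcons t (.or χ₁ χ₂) h
    rw [hcons', ih₁ (mem_cl_or_left h) t, ih₂ (mem_cl_or_right h) t]
    show _ = canonSlot (suffix σ t) (.or χ₁ χ₂)
    rw [canonSlot_fst, canonSlot_fst]
    rfl
  | imp χ₁ χ₂ ih₁ ih₂ =>
    intro h t
    have hcons' := hcons t (.imp χ₁ χ₂) h
    rw [hcons', ih₁ (mem_cl_imp_left h) t, ih₂ (mem_cl_imp_right h) t]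
    show _ = canonSlot (suffix σ t) (.imp χ₁ χ₂)
    rw [canonSlot_fst, canonSlot_fst]
    rfl
  | eventually χ ih =>
    intro h t
    have hchild : ∀ u, (ν u ⟨χ, mem_cl_eventually h⟩).1 = rV χ (suffix σ u) := by
      intro u
      rw [ih (mem_cl_eventually h) u, canonSlot_fst]
    -- component streams of the stored slot
    set A : ℕ → Slot := fun u => ν u ⟨.eventually χ, h⟩ with hA
    have heq1 : ∀ u, (A u).1.1 = (st1 χ σ u || (A (u+1)).1.1) := by
      intro u
      have := (hrun u (.eventually χ) h).1
      rw [hchild u] at this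
      exact this
    have heq2 : ∀ u, (A u).1.2.1 = (st2 χ σ u || (A (u+1)).1.2.1) := by
      intro u
      have := (hrun u (.eventually χ) h).2.1
      rw [hchild u] at this
      exact this
    have heq3 : ∀ u, (A u).1.2.2.1 = (st3 χ σ u || (A (u+1)).1.2.2.1) := by
      intro u
      have := (hrun u (.eventually χ) h).2.2.1
      rw [hchild u] at this
      exact this
    have heq4 : ∀ u, (A u).1.2.2.2 = (st4 χ σ u || (A (u+1)).1.2.2.2) := by
      intro u
      have := (hrun u (.eventually χ) h).2.2.2
      rw [hchild u] at this
      exact this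
    have hacc1 : ∀ i, ∃ j, i ≤ j ∧ ((A j).1.1 = false ∨ st1 χ σ j = true) := by
      intro i
      obtain ⟨j, hij, hj⟩ := hacc (.eventually χ) 0 i
      refine ⟨j, hij, ?_⟩
      have := hj h
      rwa [hchild j] at this
    have hacc2 : ∀ i, ∃ j, i ≤ j ∧ ((A j).1.2.1 = false ∨ st2 χ σ j = true) := by
      intro i
      obtain ⟨j, hij, hj⟩ := hacc (.eventually χ) 1 i
      refine ⟨j, hij, ?_⟩
      have := hj h
      rwa [hchild j] at this
    have hacc3 : ∀ i, ∃ j, i ≤ j ∧ ((A j).1.2.2.1 = false ∨ st3 χ σ j = true) := by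
      intro i
      obtain ⟨j, hij, hj⟩ := hacc (.eventually χ) 2 i
      refine ⟨j, hij, ?_⟩
      have := hj h
      rwa [hchild j] at this
    have hacc4 : ∀ i, ∃ j, i ≤ j ∧ ((A j).1.2.2.2 = false ∨ st4 χ σ j = true) := by
      intro i
      obtain ⟨j, hij, hj⟩ := hacc (.eventually χ) 3 i
      refine ⟨j, hij, ?_⟩
      have := hj h
      rwa [hchild j] at this
    have s1 : ∀ u, (A u).1.1 = bSup (fun i => st1 χ σ (u+i)) :=
      dia_sound (st1 χ σ) (fun u => (A u).1.1) heq1 hacc1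
    have s2 : ∀ u, (A u).1.2.1 = bSup (fun i => st2 χ σ (u+i)) :=
      dia_sound (st2 χ σ) (fun u => (A u).1.2.1) heq2 hacc2
    have s3 : ∀ u, (A u).1.2.2.1 = bSup (fun i => st3 χ σ (u+i)) :=
      dia_sound (st3 χ σ) (fun u => (A u).1.2.2.1) heq3 hacc3
    have s4 : ∀ u, (A u).1.2.2.2 = bSup (fun i => st4 χ σ (u+i)) :=
      dia_sound (st4 χ σ) (fun u => (A u).1.2.2.2) heq4 hacc4
    have hg := (hcons t (.eventually χ) h).2
    apply slot_ext
    · show (A t).1.1 = _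
      rw [s1 t]
      show _ = (rV (.eventually χ) (suffix σ t)).1
      rw [rV_eventually]
      simp [st1_shiftF]
    · show (A t).1.2.1 = _
      rw [s2 t]
      show _ = (rV (.eventually χ) (suffix σ t)).2.1
      rw [rV_eventually]
      simp [st2_shiftF]
    · show (A t).1.2.2.1 = _
      rw [s3 t]
      show _ = (rV (.eventually χ) (suffix σ t)).2.2.1
      rw [rV_eventually]
      simp [st3_shiftF]
    · show (A t).1.2.2.2 = _
      rw [s4 t]
      show _ = (rV (.eventually χ) (suffix σ t)).2.2.2
      rw [rV_eventually]
      simp [st4_shiftF]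
    · exact congrArg Prod.fst hg
    · exact congrArg Prod.snd hg
  | always χ ih =>
    intro h t
    have hchild : ∀ u, (ν u ⟨χ, mem_cl_always h⟩).1 = rV χ (suffix σ u) := by
      intro u
      rw [ih (mem_cl_always h) u, canonSlot_fst]
    set A : ℕ → Slot := fun u => ν u ⟨.always χ, h⟩ with hA
    have hstep : ∀ u,
        (A u).1.1 = (st1 χ σ u && (A (u+1)).1.1) ∧
        (A u).1.2.1 = (A (u+1)).1.2.1 ∧
        (A u).1.2.2.1 = (A (u+1)).1.2.2.1 ∧
        (A u).1.2.2.2 = (st4 χ σ u || (A (u+1)).1.2.2.2) ∧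
        (A u).2.1 = (st2 χ σ u && (A (u+1)).2.1) ∧
        (A u).2.2 = (st3 χ σ u || (A (u+1)).2.2) := by
      intro u
      have hh := hrun u (.always χ) h
      rw [hchild u] at hh
      exact hh
    have hacc0 : ∀ i, ∃ j, i ≤ j ∧ ((A j).1.1 = true ∨ st1 χ σ j = false) := by
      intro i
      obtain ⟨j, hij, hj⟩ := hacc (.always χ) 0 i
      refine ⟨j, hij, ?_⟩
      have := hj h
      rwa [hchild j] at this
    have hacc1 : ∀ i, ∃ j, i ≤ j ∧
        (((A j).1.2.1 = true ∧ (A j).2.1 = true) ∨ ((A j).1.2.1 = false ∧ st2 χ σ j = false)) := by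
      intro i
      obtain ⟨j, hij, hj⟩ := hacc (.always χ) 1 i
      refine ⟨j, hij, ?_⟩
      have := hj h
      rwa [hchild j] at this
    have hacc2 : ∀ i, ∃ j, i ≤ j ∧
        (((A j).1.2.2.1 = true ∧ st3 χ σ j = true) ∨ ((A j).1.2.2.1 = false ∧ (A j).2.2 = false)) := by
      intro i
      obtain ⟨j, hij, hj⟩ := hacc (.always χ) 2 i
      refine ⟨j, hij, ?_⟩
      have := hj h
      rwa [hchild j] at this
    have hacc3 : ∀ i, ∃ j, i ≤ j ∧ ((A j).1.2.2.2 = false ∨ st4 χ σ j = true) := by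
      intro i
      obtain ⟨j, hij, hj⟩ := hacc (.always χ) 3 i
      refine ⟨j, hij, ?_⟩
      have := hj h
      rwa [hchild j] at this
    -- soundness of the four components and the two guesses
    have s1 : ∀ u, (A u).1.1 = bInf (fun i => st1 χ σ (u+i)) :=
      box_sound (st1 χ σ) (fun u => (A u).1.1) (fun u => (hstep u).1) hacc0
    have s4 : ∀ u, (A u).1.2.2.2 = bSup (fun i => st4 χ σ (u+i)) :=
      dia_sound (st4 χ σ) (fun u => (A u).1.2.2.2) (fun u => (hstep u).2.2.2.1) hacc3
    have sg2 : ∀ u, (A u).2.1 = bInf (fun i => st2 χ σ (u+i)) := by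
      apply box_sound (st2 χ σ) _ (fun u => (hstep u).2.2.2.2.1)
      intro i
      obtain ⟨j, hij, hj⟩ := hacc1 i
      refine ⟨j, hij, ?_⟩
      rcases hj with ⟨_, hg⟩ | ⟨_, hx⟩
      · exact Or.inl hg
      · exact Or.inr hx
    have sg3 : ∀ u, (A u).2.2 = bSup (fun i => st3 χ σ (u+i)) := by
      apply dia_sound (st3 χ σ) _ (fun u => (hstep u).2.2.2.2.2)
      intro i
      obtain ⟨j, hij, hj⟩ := hacc2 i
      refine ⟨j, hij, ?_⟩
      rcases hj with ⟨_, hx⟩ | ⟨_, hg⟩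
      · exact Or.inr hx
      · exact Or.inl hg
    have hc2 : ∀ u u', (A u).1.2.1 = (A u').1.2.1 :=
      const_of_step _ (fun u => (hstep u).2.1)
    have hc3 : ∀ u u', (A u).1.2.2.1 = (A u').1.2.2.1 :=
      const_of_step _ (fun u => (hstep u).2.2.1)
    have s2 : (A t).1.2.1 = bSup (fun j => bInf fun i => st2 χ σ (t+(j+i))) := by
      cases hval : (A t).1.2.1 with
      | true =>
        symm
        rw [bSup_eq_true]
        obtain ⟨j, htj, hj⟩ := hacc1 t
        rcases hj with ⟨_, hg⟩ | ⟨ha, _⟩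
        · refine ⟨j - t, ?_⟩
          have := sg2 j
          rw [hg] at this
          have hf : (fun i => st2 χ σ (t + (j - t + i))) = fun i => st2 χ σ (j + i) := by
            funext i; congr 1; omega
          rw [hf]
          exact this.symm
        · rw [hc2 j t, hval] at ha
          exact absurd ha (by simp)
      | false =>
        symm
        rw [bSup_eq_false]
        intro j'
        rw [bInf_eq_false]
        obtain ⟨j, htj, hj⟩ := hacc1 (t + j')
        rcases hj with ⟨ha, _⟩ | ⟨_, hx⟩
        · rw [hc2 j t, hval] at ha
          exact absurd ha (by simp)
        · refine ⟨j - (t + j'), ?_⟩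
          rw [← hx]; congr 1; omega
    have s3 : (A t).1.2.2.1 = bInf (fun j => bSup fun i => st3 χ σ (t+(j+i))) := by
      cases hval : (A t).1.2.2.1 with
      | true =>
        symm
        rw [bInf_eq_true]
        intro j'
        rw [bSup_eq_true]
        obtain ⟨j, htj, hj⟩ := hacc2 (t + j')
        rcases hj with ⟨_, hx⟩ | ⟨ha, _⟩
        · refine ⟨j - (t + j'), ?_⟩
          rw [← hx]; congr 1; omega
        · rw [hc3 j t, hval] at ha
          exact absurd ha (by simp)
      | false =>
        symm
        rw [bInf_eq_false]
        obtain ⟨j, htj, hj⟩ := hacc2 t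
        rcases hj with ⟨ha, _⟩ | ⟨_, hg⟩
        · rw [hc3 j t, hval] at ha
          exact absurd ha (by simp)
        · refine ⟨j - t, ?_⟩
          rw [bSup_eq_false]
          have := sg3 j
          rw [hg] at this
          have hall := bSup_eq_false.1 this.symm
          intro i
          have := hall i
          rw [← this]; congr 1; omega
    apply slot_ext
    · show (A t).1.1 = _
      rw [s1 t]
      show _ = (rV (.always χ) (suffix σ t)).1
      rw [rV_always]
      simp [st1_shiftF]
    · show (A t).1.2.1 = _
      rw [s2]
      show _ = (rV (.always χ) (suffix σ t)).2.1
      rw [rV_always]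
      simp [st2_shiftF]
    · show (A t).1.2.2.1 = _
      rw [s3]
      show _ = (rV (.always χ) (suffix σ t)).2.2.1
      rw [rV_always]
      simp [st3_shiftF]
    · show (A t).1.2.2.2 = _
      rw [s4 t]
      show _ = (rV (.always χ) (suffix σ t)).2.2.2
      rw [rV_always]
      simp [st4_shiftF]
    · show (A t).2.1 = _
      rw [sg2 t]
      show _ = (canonSlot (suffix σ t) (.always χ)).2.1
      rw [canonSlot_always]
      simp [st2_shiftF]
    · show (A t).2.2 = _
      rw [sg3 t]
      show _ = (canonSlot (suffix σ t) (.always χ)).2.2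
      rw [canonSlot_always]
      simp [st3_shiftF]

end Sound

section AutomatonQ

set_option linter.unusedSectionVars false

variable {P : Type} [DecidableEq P]

/-- Consistent states. -/
def GoodState (φ : RFormula P) : Type := {v : {ψ : RFormula P // ψ ∈ cl φ} → Slot // Cons φ v}

/-- Full state space: consistent product states plus the five initial states. -/
abbrev QS (φ : RFormula P) : Type := GoodState φ ⊕ {b : TV // TVMono b}

noncomputable def canonGood (φ : RFormula P) (σ : ℕ → Set P) : GoodState φ :=
  ⟨canonState φ σ, canon_cons φ σ⟩

noncomputable def QTrans (φ : RFormula P) : QS φ → Set P → QS φ → Prop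
  | .inl v, s, .inl w => Step φ v.1 s w.1
  | .inr b, s, .inl w =>
      ∃ v : GoodState φ, (v.1 ⟨φ, mem_cl_self φ⟩).1 = b.val ∧ Step φ v.1 s w.1
  | _, _, .inr _ => False

def accQ (φ : RFormula P) : QS φ → RFormula P → ℕ → Prop
  | .inl v, ψ, k => accAt φ v.1 ψ k
  | .inr _, _, _ => True

def FQ (φ : RFormula P) (ψ : RFormula P) (k : ℕ) : Set (QS φ) := {q | accQ φ q ψ k}

lemma canon_step' (φ : RFormula P) (σ : ℕ → Set P) (t : ℕ) :
    Step φ (canonState φ (suffix σ t)) (σ t) (canonState φ (suffix σ (t+1))) := by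
  have h := canon_step φ (suffix σ t)
  rw [suffix_suffix] at h
  rwa [show suffix σ t 0 = σ t from by simp [suffix]] at h

lemma canon_acc' (φ : RFormula P) (σ : ℕ → Set P) (ψ : RFormula P) (k : ℕ) :
    ∀ i, ∃ j, i ≤ j ∧ 1 ≤ j ∧ accAt φ (canonState φ (suffix σ j)) ψ k := by
  intro i
  obtain ⟨j, hij, hj⟩ := canon_acc φ σ ψ k (max i 1)
  exact ⟨j, le_trans (le_max_left _ _) hij, le_trans (le_max_right _ _) hij, hj⟩

/-- Acceptance of arbitrary (formula, index) pairs holds trivially outside the real range. -/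
lemma accAt_trivial (φ : RFormula P) (v : {ψ : RFormula P // ψ ∈ cl φ} → Slot)
    (ψ : RFormula P) (k : ℕ) (h : ψ ∉ cl φ ∨ 4 ≤ k) : accAt φ v ψ k := by
  rcases h with h | h
  · rcases k with _|_|_|_|k <;> cases ψ <;> first
      | trivial
      | (intro hh; exact absurd hh h)
  · obtain ⟨k', rfl⟩ : ∃ k', k = k' + 4 := ⟨k - 4, by omega⟩
    cases ψ <;> trivial

/-- The key characterization: from the initial state `q_b`, the automaton accepts `σ`
iff the value of `φ` on `σ` is `b`. -/
lemma accepts_iff (φ : RFormula P) (b : {b : TV // TVMono b}) (σ : ℕ → Set P)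
    (hBig : ∀ (ρ : ℕ → QS φ), ρ 0 = .inr b → (∀ i, QTrans φ (ρ i) (σ i) (ρ (i+1))) →
      (∀ (ψk : {ψ : RFormula P // ψ ∈ cl φ} × Fin 4) (i : ℕ),
        ∃ j, i ≤ j ∧ ρ j ∈ FQ φ ψk.1.val ψk.2.val) → rV φ σ = b.val)
    : True := trivial

lemma accepted_of_rV (φ : RFormula P) (b : {b : TV // TVMono b}) (σ : ℕ → Set P)
    (hb : rV φ σ = b.val) :
    ∃ ρ : ℕ → QS φ, ρ 0 = .inr b ∧ (∀ i, QTrans φ (ρ i) (σ i) (ρ (i+1)))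
      ∧ ∀ (ψ : RFormula P) (k : ℕ) (i : ℕ), ∃ j, i ≤ j ∧ ρ j ∈ FQ φ ψ k := by
  refine ⟨fun j => match j with
    | 0 => .inr b
    | j+1 => .inl (canonGood φ (suffix σ (j+1))), rfl, ?_, ?_⟩
  · intro i
    cases i with
    | zero =>
      show QTrans φ (.inr b) (σ 0) (.inl (canonGood φ (suffix σ 1)))
      refine ⟨canonGood φ σ, ?_, ?_⟩
      · rw [show (canonGood φ σ).1 ⟨φ, mem_cl_self φ⟩ = canonSlot σ φ from rfl, canonSlot_fst]
        exact hb
      · have := canon_step' φ σ 0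
        rwa [suffix_zero] at this
    | succ j =>
      show Step φ (canonState φ (suffix σ (j+1))) (σ (j+1)) (canonState φ (suffix σ (j+2)))
      exact canon_step' φ σ (j+1)
  · intro ψ k i
    obtain ⟨j, hij, h1j, hj⟩ := canon_acc' φ σ ψ k i
    refine ⟨j, hij, ?_⟩
    obtain ⟨j', rfl⟩ : ∃ j', j = j' + 1 := ⟨j - 1, by omega⟩
    exact hj

lemma rV_of_accepted (φ : RFormula P) (b : {b : TV // TVMono b}) (σ : ℕ → Set P)
    (ρ : ℕ → QS φ) (h0 : ρ 0 = .inr b) (hstep : ∀ i, QTrans φ (ρ i) (σ i) (ρ (i+1)))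
    (hacc : ∀ (ψ : RFormula P) (k : ℕ), ψ ∈ cl φ → k < 4 →
      ∀ i, ∃ j, i ≤ j ∧ ρ j ∈ FQ φ ψ k) :
    rV φ σ = b.val := by
  -- every state after time 0 is a product state
  have hprod : ∀ j, ∃ w : GoodState φ, ρ (j+1) = .inl w := by
    intro j
    induction j with
    | zero =>
      have := hstep 0
      rw [h0] at this
      cases hρ : ρ 1 with
      | inl w => exact ⟨w, rfl⟩
      | inr c => rw [hρ] at this; exact absurd this (by intro hh; exact hh)
    | succ n ih =>
      obtain ⟨w, hw⟩ := ih
      have := hstep (n+1)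
      rw [hw] at this
      cases hρ : ρ (n+2) with
      | inl w' => exact ⟨w', rfl⟩
      | inr c => rw [hρ] at this; exact absurd this (by intro hh; exact hh)
  choose w hw using hprod
  -- the tail run is a consistent, accepting run over `suffix σ 1`
  have hruns : ∀ t, Step φ (w t).1 (suffix σ 1 t) (w (t+1)).1 := by
    intro t
    have := hstep (t+1)
    rw [hw t, hw (t+1)] at this
    rwa [show suffix σ 1 t = σ (t+1) from by simp [suffix, Nat.add_comm]]
  have haccs : ∀ (ψ : RFormula P) (k : ℕ) (i : ℕ), ∃ j, i ≤ j ∧ accAt φ (w j).1 ψ k := by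
    intro ψ k i
    by_cases hmem : ψ ∈ cl φ
    · by_cases hk : k < 4
      · obtain ⟨j, hij, hj⟩ := hacc ψ k hmem hk (i+1)
        obtain ⟨j', rfl⟩ : ∃ j', j = j' + 1 := ⟨j - 1, by omega⟩
        refine ⟨j', by omega, ?_⟩
        have : accQ φ (ρ (j'+1)) ψ k := hj
        rwa [hw j'] at this
      · exact ⟨i, le_refl _, accAt_trivial _ _ _ _ (Or.inr (by omega))⟩
    · exact ⟨i, le_refl _, accAt_trivial _ _ _ _ (Or.inl hmem)⟩
  have hsound := core_sound φ (suffix σ 1) (fun t => (w t).1) (fun t => (w t).2) hruns haccs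
  -- hence the state at time 1 is the canonical state of `suffix σ 1`
  have hw0 : (w 0).1 = canonState φ (suffix σ 1) := by
    funext ψ
    have := hsound ψ.val ψ.property 0
    rw [suffix_zero] at this
    exact this
  -- use the initial transition and soundness over `σ` itself
  have h1 := hstep 0
  rw [h0, hw 0] at h1
  obtain ⟨v, hvb, hvstep⟩ := h1
  rw [hw0] at hvstep
  -- build a run over σ starting at v
  set ν : ℕ → GoodState φ := fun t => match t with
    | 0 => v
    | t+1 => canonGood φ (suffix σ (t+1)) with hν
  have hruns2 : ∀ t, Step φ (ν t).1 (σ t) (ν (t+1)).1 := by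
    intro t
    cases t with
    | zero =>
      show Step φ v.1 (σ 0) (canonState φ (suffix σ 1))
      exact hvstep
    | succ n =>
      show Step φ (canonState φ (suffix σ (n+1))) (σ (n+1)) (canonState φ (suffix σ (n+2)))
      exact canon_step' φ σ (n+1)
  have hacc2 : ∀ (ψ : RFormula P) (k : ℕ) (i : ℕ), ∃ j, i ≤ j ∧ accAt φ (ν j).1 ψ k := by
    intro ψ k i
    obtain ⟨j, hij, h1j, hj⟩ := canon_acc' φ σ ψ k i
    refine ⟨j, hij, ?_⟩
    obtain ⟨j', rfl⟩ : ∃ j', j = j' + 1 := ⟨j - 1, by omega⟩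
    exact hj
  have hsound2 := core_sound φ σ (fun t => (ν t).1) (fun t => (ν t).2) hruns2 hacc2
  have := hsound2 φ (mem_cl_self φ) 0
  rw [suffix_zero] at this
  have : (v.1 ⟨φ, mem_cl_self φ⟩).1 = rV φ σ := by
    have h2 : v.1 ⟨φ, mem_cl_self φ⟩ = canonSlot σ φ := this
    rw [h2, canonSlot_fst]
  rw [← this, hvb]

end AutomatonQ

section Counting

set_option linter.unusedSectionVars false

variable {P : Type} [DecidableEq P]

/-- Free part of a slot, per formula shape. -/
def freeF : RFormula P → Finset Slot
  | .atom _ => {(ttop, true, true), (tbot, true, true)}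
  | .always (.and _ _) => Finset.univ.filter chainC
  | .always (.or _ _) => Finset.univ.filter chainC
  | .always (.imp _ _) => Finset.univ.filter chainC
  | .always _ => Finset.univ.filter (fun s => TVMono s.1 ∧ s.2 = (true, true))
  | .eventually _ => Finset.univ.filter (fun s => TVMono s.1 ∧ s.2 = (true, true))
  | _ => {(ttop, true, true)}

def nrm : RFormula P → Slot → Slot
  | .atom _, s => (s.1, true, true)
  | .always (.and _ _), s => s
  | .always (.or _ _), s => s
  | .always (.imp _ _), s => s
  | .always _, s => (s.1, true, true)
  | .eventually _, s => (s.1, true, true)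
  | _, _ => (ttop, true, true)

def recon (g : RFormula P → Slot) : RFormula P → Slot
  | .atom p => g (.atom p)
  | .not χ => (tneg (recon g χ).1, true, true)
  | .and χ₁ χ₂ => (tmeet (recon g χ₁).1 (recon g χ₂).1, true, true)
  | .or χ₁ χ₂ => (tjoin (recon g χ₁).1 (recon g χ₂).1, true, true)
  | .imp χ₁ χ₂ => (timp (recon g χ₁).1 (recon g χ₂).1, true, true)
  | .eventually χ => ((g (.eventually χ)).1, true, true)
  | .always (.and χ₁ χ₂) => g (.always (.and χ₁ χ₂))
  | .always (.or χ₁ χ₂) => g (.always (.or χ₁ χ₂))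
  | .always (.imp χ₁ χ₂) => g (.always (.imp χ₁ χ₂))
  | .always (.atom p) =>
      ((g (.always (.atom p))).1, (g (.always (.atom p))).1.1, (g (.always (.atom p))).1.2.2.2)
  | .always (.not χ) =>
      ((g (.always (.not χ))).1, (g (.always (.not χ))).1.1, (g (.always (.not χ))).1.2.2.2)
  | .always (.always χ) =>
      ((g (.always (.always χ))).1, (g (.always (.always χ))).1.2.1,
        (recon g (.always χ)).1.2.2.1)
  | .always (.eventually χ) =>
      ((g (.always (.eventually χ))).1, (g (.always (.eventually χ))).1.2.1,
        (recon g (.eventually χ)).1.2.2.1)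

noncomputable def inj0 {φ : RFormula P} (v : GoodState φ) : RFormula P → Slot :=
  open Classical in
  fun ψ => if h : ψ ∈ cl φ then nrm ψ (v.1 ⟨ψ, h⟩) else (ttop, true, true)

lemma inj0_eq {φ : RFormula P} (v : GoodState φ) (ψ : RFormula P) (h : ψ ∈ cl φ) :
    inj0 v ψ = nrm ψ (v.1 ⟨ψ, h⟩) := by
  simp [inj0, h]

lemma recon_correct {φ : RFormula P} (v : GoodState φ) :
    ∀ (ψ : RFormula P) (h : ψ ∈ cl φ), recon (inj0 v) ψ = v.1 ⟨ψ, h⟩ := by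
  intro ψ
  induction ψ with
  | atom p =>
    intro h
    have hc := v.2 (.atom p) h
    rw [show recon (inj0 v) (.atom p) = inj0 v (.atom p) from rfl, inj0_eq v _ h]
    apply Prod.ext
    · rfl
    · exact hc.2.symm
  | not χ ih =>
    intro h
    have hc := v.2 (.not χ) h
    show (tneg (recon (inj0 v) χ).1, true, true) = _
    rw [ih (mem_cl_not h), hc]
  | and χ₁ χ₂ ih₁ ih₂ =>
    intro h
    have hc := v.2 (.and χ₁ χ₂) h
    show (tmeet (recon (inj0 v) χ₁).1 (recon (inj0 v) χ₂).1, true, true) = _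
    rw [ih₁ (mem_cl_and_left h), ih₂ (mem_cl_and_right h), hc]
  | or χ₁ χ₂ ih₁ ih₂ =>
    intro h
    have hc := v.2 (.or χ₁ χ₂) h
    show (tjoin (recon (inj0 v) χ₁).1 (recon (inj0 v) χ₂).1, true, true) = _
    rw [ih₁ (mem_cl_or_left h), ih₂ (mem_cl_or_right h), hc]
  | imp χ₁ χ₂ ih₁ ih₂ =>
    intro h
    have hc := v.2 (.imp χ₁ χ₂) h
    show (timp (recon (inj0 v) χ₁).1 (recon (inj0 v) χ₂).1, true, true) = _
    rw [ih₁ (mem_cl_imp_left h), ih₂ (mem_cl_imp_right h), hc]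
  | eventually χ ih =>
    intro h
    have hc := v.2 (.eventually χ) h
    show ((inj0 v (.eventually χ)).1, true, true) = _
    rw [inj0_eq v _ h]
    apply Prod.ext
    · rfl
    · exact hc.2.symm
  | always χ ih =>
    intro h
    have hc := v.2 (.always χ) h
    cases χ with
    | and χ₁ χ₂ =>
      show inj0 v (.always (.and χ₁ χ₂)) = _
      rw [inj0_eq v _ h]
      rfl
    | or χ₁ χ₂ =>
      show inj0 v (.always (.or χ₁ χ₂)) = _
      rw [inj0_eq v _ h]
      rfl
    | imp χ₁ χ₂ =>
      show inj0 v (.always (.imp χ₁ χ₂)) = _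
      rw [inj0_eq v _ h]
      rfl
    | atom p =>
      show ((inj0 v _).1, (inj0 v _).1.1, (inj0 v _).1.2.2.2) = _
      rw [inj0_eq v _ h]
      obtain ⟨hm, h2, h3⟩ := hc
      apply slot_ext <;> first | rfl | exact h2.symm | exact h3.symm
    | not χ' =>
      show ((inj0 v _).1, (inj0 v _).1.1, (inj0 v _).1.2.2.2) = _
      rw [inj0_eq v _ h]
      obtain ⟨hm, h2, h3⟩ := hc
      apply slot_ext <;> first | rfl | exact h2.symm | exact h3.symm
    | always χ' =>
      show ((inj0 v _).1, (inj0 v _).1.2.1, (recon (inj0 v) (.always χ')).1.2.2.1) = _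
      rw [inj0_eq v _ h, ih (mem_cl_always h)]
      obtain ⟨hm, h2, h3⟩ := hc
      apply slot_ext <;> first | rfl | exact h2.symm | exact h3.symm
    | eventually χ' =>
      show ((inj0 v _).1, (inj0 v _).1.2.1, (recon (inj0 v) (.eventually χ')).1.2.2.1) = _
      rw [inj0_eq v _ h, ih (mem_cl_always h)]
      obtain ⟨hm, h2, h3⟩ := hc
      apply slot_ext <;> first | rfl | exact h2.symm | exact h3.symm

lemma normalize_mem {φ : RFormula P} (v : GoodState φ) (ψ : RFormula P) (h : ψ ∈ cl φ) :
    nrm ψ (v.1 ⟨ψ, h⟩) ∈ freeF ψ := by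
  cases ψ with
  | atom p =>
    have hc := v.2 (.atom p) h
    rcases hc.1 with h1 | h1 <;> simp [nrm, freeF, h1]
  | not χ => simp [nrm, freeF]
  | and χ₁ χ₂ => simp [nrm, freeF]
  | or χ₁ χ₂ => simp [nrm, freeF]
  | imp χ₁ χ₂ => simp [nrm, freeF]
  | eventually χ =>
    have hc := v.2 (.eventually χ) h
    simp [nrm, freeF]
    exact hc.1
  | always χ =>
    have hc := v.2 (.always χ) h
    cases χ with
    | and χ₁ χ₂ => simp [nrm, freeF]; exact hc
    | or χ₁ χ₂ => simp [nrm, freeF]; exact hc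
    | imp χ₁ χ₂ => simp [nrm, freeF]; exact hc
    | atom p => simp [nrm, freeF]; exact hc.1
    | not χ' => simp [nrm, freeF]; exact hc.1
    | always χ' => simp [nrm, freeF]; exact hc.1
    | eventually χ' => simp [nrm, freeF]; exact hc.1

instance goodFinite (φ : RFormula P) : Finite (GoodState φ) := by
  unfold GoodState
  infer_instance

noncomputable instance goodFintype (φ : RFormula P) : Fintype (GoodState φ) :=
  Fintype.ofFinite _

noncomputable def J (φ : RFormula P) (v : GoodState φ) :
    (ψ : {ψ : RFormula P // ψ ∈ cl φ}) → {s : Slot // s ∈ freeF ψ.val} :=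
  fun ψ => ⟨nrm ψ.val (v.1 ψ), normalize_mem v ψ.val ψ.2⟩

lemma J_inj (φ : RFormula P) : Function.Injective (J φ) := by
  intro v v' hJ
  have hinj : inj0 v = inj0 v' := by
    funext ψ
    by_cases hm : ψ ∈ cl φ
    · rw [inj0_eq v ψ hm, inj0_eq v' ψ hm]
      have := congrFun hJ ⟨ψ, hm⟩
      exact congrArg Subtype.val this
    · simp [inj0, hm]
  apply Subtype.ext
  funext ψ
  rw [← recon_correct v ψ.val ψ.2, ← recon_correct v' ψ.val ψ.2, hinj]

lemma goodState_card_le (φ : RFormula P) :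
    Fintype.card (GoodState φ) ≤ ∏ ψ ∈ cl φ, (freeF ψ).card := by
  have h1 := Fintype.card_le_of_injective (J φ) (J_inj φ)
  rw [Fintype.card_pi] at h1
  refine le_trans h1 (le_of_eq ?_)
  rw [Finset.univ_eq_attach]
  rw [← Finset.prod_attach (cl φ) (fun ψ => (freeF ψ).card)]
  exact Finset.prod_congr rfl (fun ψ _ => Fintype.card_coe _)

end Counting

section ProdBound

set_option linter.unusedSectionVars false

variable {P : Type} [DecidableEq P]

def isBB : RFormula P → Bool
  | .always (.and _ _) => true
  | .always (.or _ _) => true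
  | .always (.imp _ _) => true
  | _ => false

def childF : RFormula P → RFormula P
  | .always χ => χ
  | ψ => ψ

lemma fc_atom (p : P) : (freeF (.atom p)).card = 2 := by
  show ({(ttop, true, true), (tbot, true, true)} : Finset Slot).card = 2
  decide

lemma fc_le7 (ψ : RFormula P) : (freeF ψ).card ≤ 7 := by
  cases ψ with
  | atom _ => rw [fc_atom]; omega
  | not _ => show ({(ttop, true, true)} : Finset Slot).card ≤ 7; decide
  | and _ _ => show ({(ttop, true, true)} : Finset Slot).card ≤ 7; decide
  | or _ _ => show ({(ttop, true, true)} : Finset Slot).card ≤ 7; decide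
  | imp _ _ => show ({(ttop, true, true)} : Finset Slot).card ≤ 7; decide
  | eventually _ =>
    show (Finset.univ.filter (fun s : Slot => TVMono s.1 ∧ s.2 = (true, true))).card ≤ 7
    decide
  | always χ =>
    cases χ <;>
      first
      | (show (Finset.univ.filter chainC).card ≤ 7; decide)
      | (show (Finset.univ.filter (fun s : Slot => TVMono s.1 ∧ s.2 = (true, true))).card ≤ 7;
         decide)

lemma fc_le5 (ψ : RFormula P) (h : isBB ψ = false) : (freeF ψ).card ≤ 5 := by
  cases ψ with
  | atom _ => rw [fc_atom]; omega
  | not _ => show ({(ttop, true, true)} : Finset Slot).card ≤ 5; decide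
  | and _ _ => show ({(ttop, true, true)} : Finset Slot).card ≤ 5; decide
  | or _ _ => show ({(ttop, true, true)} : Finset Slot).card ≤ 5; decide
  | imp _ _ => show ({(ttop, true, true)} : Finset Slot).card ≤ 5; decide
  | eventually _ =>
    show (Finset.univ.filter (fun s : Slot => TVMono s.1 ∧ s.2 = (true, true))).card ≤ 5
    decide
  | always χ =>
    cases χ <;> simp [isBB] at h <;>
      (show (Finset.univ.filter (fun s : Slot => TVMono s.1 ∧ s.2 = (true, true))).card ≤ 5;
       decide)

lemma fc_bool (ψ : RFormula P)
    (h : (∃ a b, ψ = .and a b) ∨ (∃ a b, ψ = .or a b) ∨ (∃ a b, ψ = .imp a b)) :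
    (freeF ψ).card = 1 := by
  rcases h with ⟨a, b, rfl⟩ | ⟨a, b, rfl⟩ | ⟨a, b, rfl⟩ <;>
    (show ({(ttop, true, true)} : Finset Slot).card = 1; decide)

lemma prod_bound (S : Finset (RFormula P))
    (hcl : ∀ χ : RFormula P, .always χ ∈ S → χ ∈ S)
    (hatom : ∃ p : P, .atom p ∈ S) :
    (∏ ψ ∈ S, (freeF ψ).card) ≤ 4 * 5 ^ (S.card - 1) := by
  obtain ⟨p, hp⟩ := hatom
  classical
  set D := S.filter (fun ψ => isBB ψ = true) with hDdef
  set E := D.image childF with hEdef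
  have hDS : D ⊆ S := Finset.filter_subset _ _
  have hshape : ∀ d ∈ D, (∃ a b, d = .always (.and a b)) ∨ (∃ a b, d = .always (.or a b)) ∨
      (∃ a b, d = .always (.imp a b)) := by
    intro d hd
    have hbb := (Finset.mem_filter.1 hd).2
    cases d with
    | always χ =>
      cases χ with
      | and a b => exact Or.inl ⟨a, b, rfl⟩
      | or a b => exact Or.inr (Or.inl ⟨a, b, rfl⟩)
      | imp a b => exact Or.inr (Or.inr ⟨a, b, rfl⟩)
      | atom _ => simp [isBB] at hbb
      | not _ => simp [isBB] at hbb
      | always _ => simp [isBB] at hbb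
      | eventually _ => simp [isBB] at hbb
    | atom _ => simp [isBB] at hbb
    | not _ => simp [isBB] at hbb
    | and _ _ => simp [isBB] at hbb
    | or _ _ => simp [isBB] at hbb
    | imp _ _ => simp [isBB] at hbb
    | eventually _ => simp [isBB] at hbb
  have hEshape : ∀ x ∈ E, (∃ a b, x = .and a b) ∨ (∃ a b, x = .or a b) ∨
      (∃ a b, x = .imp a b) := by
    intro x hx
    obtain ⟨d, hd, rfl⟩ := Finset.mem_image.1 hx
    rcases hshape d hd with ⟨a, b, rfl⟩ | ⟨a, b, rfl⟩ | ⟨a, b, rfl⟩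
    · exact Or.inl ⟨a, b, rfl⟩
    · exact Or.inr (Or.inl ⟨a, b, rfl⟩)
    · exact Or.inr (Or.inr ⟨a, b, rfl⟩)
  have hES : E ⊆ S := by
    intro x hx
    obtain ⟨d, hd, rfl⟩ := Finset.mem_image.1 hx
    rcases hshape d hd with ⟨a, b, rfl⟩ | ⟨a, b, rfl⟩ | ⟨a, b, rfl⟩ <;>
      exact hcl _ (hDS hd)
  have hinj : Set.InjOn childF (D : Set (RFormula P)) := by
    intro x hx y hy hxy
    replace hx := Finset.mem_coe.1 hx
    replace hy := Finset.mem_coe.1 hy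
    rcases hshape x hx with ⟨a, b, rfl⟩ | ⟨a, b, rfl⟩ | ⟨a, b, rfl⟩ <;>
      rcases hshape y hy with ⟨a', b', rfl⟩ | ⟨a', b', rfl⟩ | ⟨a', b', rfl⟩ <;>
      simp [childF] at hxy <;> simp [hxy]
  have hEcard : E.card = D.card := Finset.card_image_of_injOn hinj
  have hDiE : Disjoint D E := by
    rw [Finset.disjoint_left]
    intro x hxD hxE
    rcases hshape x hxD with ⟨a, b, hx⟩ | ⟨a, b, hx⟩ | ⟨a, b, hx⟩ <;>
      rcases hEshape x hxE with ⟨a', b', hx'⟩ | ⟨a', b', hx'⟩ | ⟨a', b', hx'⟩ <;>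
      (rw [hx] at hx'; cases hx')
  have hpDE : (RFormula.atom p : RFormula P) ∉ D ∪ E := by
    intro hmem
    rcases Finset.mem_union.1 hmem with hm | hm
    · rcases hshape _ hm with ⟨a, b, hx⟩ | ⟨a, b, hx⟩ | ⟨a, b, hx⟩ <;> cases hx
    · rcases hEshape _ hm with ⟨a, b, hx⟩ | ⟨a, b, hx⟩ | ⟨a, b, hx⟩ <;> cases hx
  set T := insert (RFormula.atom p) (D ∪ E) with hTdef
  have hTS : T ⊆ S := by
    rw [hTdef]
    exact Finset.insert_subset hp (Finset.union_subset hDS hES)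
  have hTcard : T.card = 2 * D.card + 1 := by
    rw [hTdef, Finset.card_insert_of_notMem hpDE, Finset.card_union_of_disjoint hDiE, hEcard]
    omega
  have hprodT : (∏ ψ ∈ T, (freeF ψ).card) ≤ 2 * 7 ^ D.card := by
    rw [hTdef, Finset.prod_insert hpDE, Finset.prod_union hDiE, fc_atom]
    have h2 : (∏ ψ ∈ D, (freeF ψ).card) ≤ 7 ^ D.card :=
      Finset.prod_le_pow_card _ _ _ (fun x _ => fc_le7 x)
    have h3 : (∏ ψ ∈ E, (freeF ψ).card) = 1 :=
      Finset.prod_eq_one (fun x hx => fc_bool x (hEshape x hx))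
    rw [h3, mul_one]
    exact Nat.mul_le_mul_left 2 h2
  have hrest : (∏ ψ ∈ S \ T, (freeF ψ).card) ≤ 5 ^ (S \ T).card := by
    apply Finset.prod_le_pow_card
    intro x hx
    apply fc_le5
    by_contra hbb
    have hbb' : isBB x = true := by
      cases hh : isBB x
      · exact absurd hh hbb
      · rfl
    have hxD : x ∈ D := Finset.mem_filter.2 ⟨(Finset.mem_sdiff.1 hx).1, hbb'⟩
    have : x ∈ T := by
      rw [hTdef]
      exact Finset.mem_insert_of_mem (Finset.mem_union_left _ hxD)
    exact (Finset.mem_sdiff.1 hx).2 this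
  have htotal : (∏ ψ ∈ S, (freeF ψ).card) =
      (∏ ψ ∈ S \ T, (freeF ψ).card) * (∏ ψ ∈ T, (freeF ψ).card) :=
    (Finset.prod_sdiff hTS).symm
  have hScard : S.card = 2 * D.card + 1 + (S \ T).card := by
    have := Finset.card_sdiff_of_subset hTS
    have hle := Finset.card_le_card hTS
    omega
  set d := D.card
  set r := (S \ T).card
  have hpow : 5 ^ (S.card - 1) = 25 ^ d * 5 ^ r := by
    have : S.card - 1 = 2 * d + r := by omega
    rw [this, pow_add, pow_mul]
    norm_num
  calc (∏ ψ ∈ S, (freeF ψ).card)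
      = (∏ ψ ∈ S \ T, (freeF ψ).card) * (∏ ψ ∈ T, (freeF ψ).card) := htotal
    _ ≤ 5 ^ r * (2 * 7 ^ d) := Nat.mul_le_mul hrest hprodT
    _ ≤ 5 ^ r * (4 * 25 ^ d) := by
        have h7 : (7:ℕ) ^ d ≤ 25 ^ d := Nat.pow_le_pow_left (by norm_num) d
        have : 2 * 7 ^ d ≤ 4 * 25 ^ d :=
          le_trans (Nat.mul_le_mul_left 2 h7) (Nat.mul_le_mul_right _ (by norm_num))
        exact Nat.mul_le_mul_left _ this
    _ = 4 * 5 ^ (S.card - 1) := by rw [hpow]; ring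

end ProdBound

section Final

set_option linter.unusedSectionVars false

variable {P : Type} [DecidableEq P]

open Classical in
noncomputable def AccQF (φ : RFormula P) : Finset (Set (QS φ)) :=
  Finset.image (fun pk : {ψ : RFormula P // ψ ∈ cl φ} × Fin 4 => FQ φ pk.1.val pk.2.val)
    Finset.univ

noncomputable def GBAQ (φ : RFormula P) : GBA (Set P) (QS φ) := ⟨QTrans φ, AccQF φ⟩

lemma acceptsQ_iff (φ : RFormula P) (b : {b : TV // TVMono b}) (σ : ℕ → Set P) :
    AcceptsFrom (GBAQ φ) (.inr b) σ ↔ rV φ σ = b.val := by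
  classical
  constructor
  · rintro ⟨ρ, h0, hstep, hF⟩
    apply rV_of_accepted φ b σ ρ h0 hstep
    intro ψ k hmem hk i
    have hFmem : FQ φ ψ k ∈ AccQF φ :=
      Finset.mem_image_of_mem _
        (Finset.mem_univ (⟨⟨ψ, hmem⟩, ⟨k, hk⟩⟩ : {ψ : RFormula P // ψ ∈ cl φ} × Fin 4))
    exact hF _ hFmem i
  · intro hb
    obtain ⟨ρ, h0, hstep, hacc⟩ := accepted_of_rV φ b σ hb
    refine ⟨ρ, h0, hstep, ?_⟩
    intro F hFm i
    obtain ⟨pk, _, rfl⟩ := Finset.mem_image.1 hFm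
    exact hacc pk.1.val pk.2.val i

end Final


/-- For every rLTL(□,◇) formula `φ` over a nonempty finite set `𝒫` of atomic
propositions there is a generalized Büchi automaton over `Σ = 2^𝒫`, with at most
`5^|cl(φ)| + 4` states and at most `4·|cl(φ)|` acceptance sets, together with a family of
states `(q_b)_{b ∈ B₄}`, such that for every `b ∈ B₄` and every `σ ∈ Σ^ω` the automaton has
an accepting run on `σ` starting in `q_b` if and only if `V(σ,φ) = b`. -/
theorem exists_GBA_for_rLTL {P : Type} [Fintype P] [Nonempty P] [DecidableEq P]
    (φ : RFormula P) :
    ∃ (n : ℕ) (A : GBA (Set P) (Fin n)) (q : {b : TV // TVMono b} → Fin n),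
      0 < n
      ∧ n ≤ 5 ^ (cl φ).card + 4
      ∧ A.Acc.card ≤ 4 * (cl φ).card
      ∧ ∀ (b : {b : TV // TVMono b}) (σ : ℕ → Set P),
          AcceptsFrom A (q b) σ ↔ rV φ σ = b.val := by
  classical
  let n := Fintype.card (QS φ)
  let e : QS φ ≃ Fin n := Fintype.equivFin _
  refine ⟨n, ⟨fun i s j => QTrans φ (e.symm i) s (e.symm j),
              (AccQF φ).image (fun F => e.symm ⁻¹' F)⟩,
          fun b => e (.inr b), ?_, ?_, ?_, ?_⟩
  · exact Fintype.card_pos_iff.2 ⟨.inr ⟨ttop, by decide⟩⟩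
  · have h1 : Fintype.card (QS φ) =
        Fintype.card (GoodState φ) + Fintype.card {b : TV // TVMono b} :=
      Fintype.card_sum
    have h2 : Fintype.card {b : TV // TVMono b} = 5 := by decide
    have h3 := goodState_card_le φ
    have h4 := prod_bound (cl φ) (fun χ h => mem_cl_always h) (exists_atom_mem_cl φ)
    have hc1 : 1 ≤ (cl φ).card := cl_card_pos φ
    have h5 : 5 ^ (cl φ).card = 5 * 5 ^ ((cl φ).card - 1) := by
      conv_lhs => rw [show (cl φ).card = ((cl φ).card - 1) + 1 from by omega]
      rw [pow_succ]
      ring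
    have h6 : 1 ≤ 5 ^ ((cl φ).card - 1) := Nat.one_le_pow _ _ (by norm_num)
    show Fintype.card (QS φ) ≤ 5 ^ (cl φ).card + 4
    omega
  · show ((AccQF φ).image (fun F => e.symm ⁻¹' F)).card ≤ 4 * (cl φ).card
    calc ((AccQF φ).image (fun F => e.symm ⁻¹' F)).card
        ≤ (AccQF φ).card := Finset.card_image_le
      _ ≤ (Finset.univ : Finset ({ψ : RFormula P // ψ ∈ cl φ} × Fin 4)).card :=
          Finset.card_image_le
      _ = (cl φ).card * 4 := by
          rw [Finset.card_univ, Fintype.card_prod, Fintype.card_coe, Fintype.card_fin]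
      _ ≤ 4 * (cl φ).card := by omega
  · intro b σ
    rw [← acceptsQ_iff φ b σ]
    constructor
    · rintro ⟨ρ, h0, hstep, hF⟩
      refine ⟨fun j => e.symm (ρ j), by simp [h0], hstep, ?_⟩
      intro F hFm i
      obtain ⟨j, hij, hj⟩ := hF (e.symm ⁻¹' F) (Finset.mem_image_of_mem _ hFm) i
      exact ⟨j, hij, hj⟩
    · rintro ⟨ρ, h0, hstep, hF⟩
      refine ⟨fun j => e (ρ j), by simp [h0], fun i => by simpa using (show QTrans φ (ρ i) (σ i) (ρ (i + 1)) from hstep i), ?_⟩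
      intro F hFm i
      obtain ⟨G, hGm, rfl⟩ := Finset.mem_image.1 hFm
      obtain ⟨j, hij, hj⟩ := hF G hGm i
      exact ⟨j, hij, by simpa using hj⟩
end
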